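/- arXiv:2006.05069 — 4 statements merged into one kernel-verified Lean document; each statement's English description precedes it below -/
import Mathlib

section
/- Let A be positive semidefinite on H and 𝔸 = diag(A,A) on H⊕H. For X, Y admitting A-adjoints, the 𝔸-Davis-Wielandt radius of the block matrix [[0,X],[Y,0]] satisfies dw_𝔸([[0,X],[Y,0]]) ≤ √(‖X‖_A²/4 + ‖X‖_A⁴) + √(‖Y‖_A²/4 + ‖Y‖_A⁴). -/
noncomputable section

namespace DW

variable {H : Type*} [NormedAddCommGroup H] [InnerProductSpace ℂ H]

/-- The semi-inner product induced by `A`: `⟨x,y⟩_A = ⟨Ax, y⟩`. -/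
def innA (A : H →L[ℂ] H) (x y : H) : ℂ := inner ℂ (A x) y

/-- The seminorm induced by `A`. -/
def normA (A : H →L[ℂ] H) (x : H) : ℝ := Real.sqrt (innA A x x).re

/-- `T` is `A`-bounded. -/
def IsABounded (A T : H →L[ℂ] H) : Prop := ∃ c > 0, ∀ x, normA A (T x) ≤ c * normA A x

/-- `S` is an `A`-adjoint of `T`. -/
def IsAAdjointPair (A T S : H →L[ℂ] H) : Prop := ∀ x y, innA A (T x) y = innA A x (S y)

/-- The `A`-operator seminorm. -/
def opNormA (A T : H →L[ℂ] H) : ℝ := sSup {r | ∃ x, normA A x = 1 ∧ r = normA A (T x)}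

/-- The `A`-minimum modulus. -/
def mA (A T : H →L[ℂ] H) : ℝ := sInf {r | ∃ x, normA A x = 1 ∧ r = normA A (T x)}

/-- The `A`-numerical radius. -/
def wA (A T : H →L[ℂ] H) : ℝ :=
  sSup {r | ∃ x, normA A x = 1 ∧ r = ‖innA A (T x) x‖}

/-- The `A`-Crawford number. -/
def cA (A T : H →L[ℂ] H) : ℝ :=
  sInf {r | ∃ x, normA A x = 1 ∧ r = ‖innA A (T x) x‖}

/-- The `A`-Davis-Wielandt radius. -/
def dwA (A T : H →L[ℂ] H) : ℝ :=
  sSup {r | ∃ x, normA A x = 1 ∧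
    r = Real.sqrt (‖innA A (T x) x‖ ^ 2 + normA A (T x) ^ 4)}

/-- The semi-inner product on `H ⊕ H` induced by `𝔸 = diag(A,A)`. -/
def innA2 (A : H →L[ℂ] H) (z w : H × H) : ℂ := innA A z.1 w.1 + innA A z.2 w.2

/-- The seminorm on `H ⊕ H` induced by `𝔸 = diag(A,A)`. -/
def normA2 (A : H →L[ℂ] H) (z : H × H) : ℝ := Real.sqrt (innA2 A z z).re

/-- The `𝔸`-numerical radius on `H ⊕ H`, `𝔸 = diag(A,A)`. -/
def wA2 (A : H →L[ℂ] H) (T : H × H →L[ℂ] H × H) : ℝ :=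
  sSup {r | ∃ z, normA2 A z = 1 ∧ r = ‖innA2 A (T z) z‖}

/-- The `𝔸`-Davis-Wielandt radius on `H ⊕ H`, `𝔸 = diag(A,A)`. -/
def dwA2 (A : H →L[ℂ] H) (T : H × H →L[ℂ] H × H) : ℝ :=
  sSup {r | ∃ z, normA2 A z = 1 ∧
    r = Real.sqrt (‖innA2 A (T z) z‖ ^ 2 + normA2 A (T z) ^ 4)}

/-- The block operator `[[0, X], [Y, 0]]` on `H ⊕ H`. -/
def offDiag (X Y : H →L[ℂ] H) : H × H →L[ℂ] H × H :=
  (X.comp (ContinuousLinearMap.snd ℂ H H)).prod (Y.comp (ContinuousLinearMap.fst ℂ H H))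

open ComplexConjugate

lemma innA_add_left (A : H →L[ℂ] H) (x y z : H) : innA A (x + y) z = innA A x z + innA A y z := by
  simp [innA, inner_add_left]

lemma innA_add_right (A : H →L[ℂ] H) (x y z : H) : innA A x (y + z) = innA A x y + innA A x z := by
  simp [innA, inner_add_right]

lemma innA_smul_left (A : H →L[ℂ] H) (c : ℂ) (x y : H) :
    innA A (c • x) y = conj c * innA A x y := by
  simp [innA, inner_smul_left, mul_comm]

lemma innA_smul_right (A : H →L[ℂ] H) (c : ℂ) (x y : H) :
    innA A x (c • y) = c * innA A x y := by
  simp [innA, inner_smul_right]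

lemma innA_self_re_nonneg [CompleteSpace H] (A : H →L[ℂ] H) (hA : A.IsPositive) (x : H) :
    0 ≤ (innA A x x).re := by
  have := hA.2 x
  simpa [ContinuousLinearMap.reApplyInnerSelf, innA] using this

lemma normA_nonneg (A : H →L[ℂ] H) (x : H) : 0 ≤ normA A x := Real.sqrt_nonneg _

lemma normA_sq [CompleteSpace H] (A : H →L[ℂ] H) (hA : A.IsPositive) (x : H) :
    normA A x ^ 2 = (innA A x x).re :=
  Real.sq_sqrt (innA_self_re_nonneg A hA x)

lemma innA_conj [CompleteSpace H] (A : H →L[ℂ] H) (hA : A.IsPositive) (x y : H) :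
    innA A y x = conj (innA A x y) := by
  have h := hA.isSelfAdjoint.adjoint_eq
  calc innA A y x = inner ℂ (A y) x := rfl
    _ = inner ℂ ((ContinuousLinearMap.adjoint A) y) x := by rw [h]
    _ = inner ℂ y (A x) := ContinuousLinearMap.adjoint_inner_left A x y
    _ = conj (inner ℂ (A x) y) := (inner_conj_symm _ _).symm
    _ = conj (innA A x y) := rfl

lemma abs_innA_le [CompleteSpace H] (A : H →L[ℂ] H) (hA : A.IsPositive) (x y : H) :
    ‖innA A x y‖ ≤ normA A x * normA A y := by
  set a := (innA A x x).re with ha'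
  set b := (innA A y y).re with hb'
  have ha : 0 ≤ a := innA_self_re_nonneg A hA x
  have hb : 0 ≤ b := innA_self_re_nonneg A hA y
  set c := innA A x y with hc
  set s := Complex.normSq c with hs'
  have hs : 0 ≤ s := Complex.normSq_nonneg c
  have hyx : innA A y x = conj c := innA_conj A hA x y
  have hyyre : innA A y y = (b : ℂ) := by
    have h := innA_conj A hA y y
    have him := congrArg Complex.im h
    simp at him
    apply Complex.ext
    · simp [hb']
    · simp; linarith
  have hexp : ∀ q : ℂ, 0 ≤ a + 2 * (q * c).re + Complex.normSq q * b := by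
    intro q
    have h0 : 0 ≤ (innA A (x + q • y) (x + q • y)).re := innA_self_re_nonneg A hA _
    have he : innA A (x + q • y) (x + q • y)
        = innA A x x + q * c + conj (q * c) + (Complex.normSq q : ℂ) * (b : ℂ) := by
      rw [innA_add_left, innA_add_right, innA_add_right, innA_smul_left, innA_smul_right,
        innA_smul_right, innA_smul_left, hyx, hyyre, ← hc]
      rw [map_mul, ← Complex.mul_conj]
      ring
    rw [he] at h0
    have hre : (innA A x x + q * c + conj (q * c) + (Complex.normSq q : ℂ) * (b : ℂ)).re
        = a + 2 * (q * c).re + Complex.normSq q * b := by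
      rw [← Complex.ofReal_mul]
      simp [Complex.add_re, Complex.conj_re, Complex.ofReal_re, ← ha']
      ring
    rw [hre] at h0
    exact h0
  have hexp' : ∀ t : ℝ, 0 ≤ a - 2 * t * s + t ^ 2 * s * b := by
    intro t
    have h := hexp (-(t : ℂ) * conj c)
    have h1 : ((-(t : ℂ) * conj c) * c).re = -(t * s) := by
      rw [mul_assoc, mul_comm (conj c) c, Complex.mul_conj, ← hs']
      rw [show -(t:ℂ) * (s:ℂ) = ((-(t*s) : ℝ) : ℂ) by push_cast; ring]
      simp
    have h2 : Complex.normSq (-(t : ℂ) * conj c) = t ^ 2 * s := by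
      rw [Complex.normSq_mul, Complex.normSq_conj, ← hs', Complex.normSq_neg,
        Complex.normSq_ofReal]
      ring
    rw [h1, h2] at h
    linarith
  have key : s ≤ a * b := by
    rcases eq_or_lt_of_le hb with hb0 | hb0
    · rcases eq_or_lt_of_le hs with hs0 | hs0
      · rw [← hs0, ← hb0]; simp
      · exfalso
        have h := hexp' ((a + 1) / (2 * s))
        rw [← hb0] at h
        have h2ts : 2 * ((a + 1) / (2 * s)) * s = a + 1 := by
          field_simp
        nlinarith
    · have h := hexp' (1 / b)
      have hb1 : b ≠ 0 := ne_of_gt hb0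
      have h1 : 2 * (1 / b) * s = 2 * s / b := by ring
      have h2 : (1 / b) ^ 2 * s * b = s / b := by
        field_simp
      rw [h1, h2] at h
      have := mul_le_mul_of_nonneg_right (by linarith : 2 * s / b - s / b ≤ a) (le_of_lt hb0)
      have e1 : (2 * s / b - s / b) * b = s := by
        field_simp
        ring
      linarith [e1 ▸ this]
  have habs : ‖c‖ = Real.sqrt s := by
    rw [hs', Complex.normSq_eq_norm_sq, Real.sqrt_sq (norm_nonneg c)]
  rw [habs]
  calc Real.sqrt s ≤ Real.sqrt (a * b) := Real.sqrt_le_sqrt key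
    _ = Real.sqrt a * Real.sqrt b := Real.sqrt_mul ha b
    _ = normA A x * normA A y := rfl

lemma normA_smul (A : H →L[ℂ] H) (c : ℂ) (x : H) :
    normA A (c • x) = ‖c‖ * normA A x := by
  unfold normA
  rw [innA_smul_left, innA_smul_right, ← mul_assoc, mul_comm (conj c) c, Complex.mul_conj,
    Complex.re_ofReal_mul, Complex.normSq_eq_norm_sq, Real.sqrt_mul (by positivity),
    Real.sqrt_sq (norm_nonneg c)]

lemma normA_le_norm (A : H →L[ℂ] H) (x : H) :
    normA A x ≤ Real.sqrt ‖A‖ * ‖x‖ := by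
  have h1 : (innA A x x).re ≤ ‖A‖ * ‖x‖ ^ 2 := by
    calc (innA A x x).re ≤ ‖innA A x x‖ := Complex.re_le_norm _
      _ = ‖(inner ℂ (A x) x : ℂ)‖ := rfl
      _ ≤ ‖A x‖ * ‖x‖ := norm_inner_le_norm _ _
      _ ≤ ‖A‖ * ‖x‖ * ‖x‖ := by
          have := A.le_opNorm x
          nlinarith [norm_nonneg x, norm_nonneg (A x)]
      _ = ‖A‖ * ‖x‖ ^ 2 := by ring
  calc normA A x = Real.sqrt (innA A x x).re := rfl
    _ ≤ Real.sqrt (‖A‖ * ‖x‖ ^ 2) := Real.sqrt_le_sqrt h1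
    _ = Real.sqrt ‖A‖ * ‖x‖ := by
        rw [Real.sqrt_mul (norm_nonneg A), Real.sqrt_sq (norm_nonneg x)]

lemma isAAdjointPair_symm [CompleteSpace H] {A X X' : H →L[ℂ] H} (hA : A.IsPositive)
    (h : IsAAdjointPair A X X') : IsAAdjointPair A X' X := by
  intro u v
  calc innA A (X' u) v = conj (innA A v (X' u)) := innA_conj A hA v (X' u)
    _ = conj (innA A (X v) u) := by rw [h v u]
    _ = innA A u (X v) := (innA_conj A hA (X v) u).symm

/-- An operator admitting an `A`-adjoint is `A`-bounded, with explicit constant. -/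

lemma normA_apply_le [CompleteSpace H] {A X X' : H →L[ℂ] H} (hA : A.IsPositive)
    (h : IsAAdjointPair A X X') (u : H) :
    normA A (X u) ≤ Real.sqrt (‖X'.comp X‖ + 1) * normA A u := by
  set T := X'.comp X with hT
  set M := ‖T‖ + 1 with hM
  have hM1 : (1 : ℝ) ≤ M := by have := norm_nonneg T; linarith
  have hM0 : (0 : ℝ) < M := lt_of_lt_of_le one_pos hM1
  have h' : IsAAdjointPair A X' X := isAAdjointPair_symm hA h
  have hsym : ∀ v w : H, innA A (T v) w = innA A v (T w) := by
    intro v w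
    calc innA A (X' (X v)) w = innA A (X v) (X w) := h' (X v) w
      _ = innA A v (X' (X w)) := h v (X w)
  have hpow : ∀ (n : ℕ) (v w : H), innA A ((T ^ n) v) w = innA A v ((T ^ n) w) := by
    intro n
    induction n with
    | zero => intro v w; simp
    | succ n ih =>
      intro v w
      have e1 : (T ^ (n + 1)) v = (T ^ n) (T v) := by
        rw [pow_succ]; rfl
      have e2 : (T ^ (n + 1)) w = T ((T ^ n) w) := by
        rw [pow_succ']; rfl
      rw [e1, e2, ih (T v) w, hsym v ((T ^ n) w)]
  set f : ℕ → ℝ := fun k => normA A ((T ^ k) u) with hf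
  have hf0 : f 0 = normA A u := by simp [hf]
  have hfnn : ∀ k, 0 ≤ f k := fun k => normA_nonneg _ _
  have hstep : ∀ k, f k ^ 2 ≤ f 0 * f (2 * k) := by
    intro k
    have e : innA A ((T ^ k) u) ((T ^ k) u) = innA A u ((T ^ (2 * k)) u) := by
      rw [hpow k u ((T ^ k) u), ← ContinuousLinearMap.comp_apply, ← ContinuousLinearMap.mul_def,
        ← pow_add]
      norm_num
      ring_nf
    calc f k ^ 2 = (innA A ((T ^ k) u) ((T ^ k) u)).re := normA_sq A hA _
      _ = (innA A u ((T ^ (2 * k)) u)).re := by rw [e]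
      _ ≤ ‖innA A u ((T ^ (2 * k)) u)‖ := Complex.re_le_norm _
      _ ≤ normA A u * normA A ((T ^ (2 * k)) u) := abs_innA_le A hA _ _
      _ = f 0 * f (2 * k) := by rw [hf0]
  set C := Real.sqrt ‖A‖ * ‖u‖ with hC
  have hCnn : 0 ≤ C := mul_nonneg (Real.sqrt_nonneg _) (norm_nonneg _)
  have hcrude : ∀ k, f k ≤ C * M ^ k := by
    intro k
    rcases Nat.eq_zero_or_pos k with hk | hk
    · subst hk
      simpa [hf0] using normA_le_norm A u
    · have h1 : ‖T ^ k‖ ≤ M ^ k := by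
        calc ‖T ^ k‖ ≤ ‖T‖ ^ k := norm_pow_le' T hk
          _ ≤ M ^ k := pow_le_pow_left₀ (norm_nonneg T) (by rw [hM]; linarith) k
      calc f k ≤ Real.sqrt ‖A‖ * ‖(T ^ k) u‖ := normA_le_norm A _
        _ ≤ Real.sqrt ‖A‖ * (‖T ^ k‖ * ‖u‖) := by
            have h2 := (T ^ k).le_opNorm u
            have h3 := Real.sqrt_nonneg ‖A‖
            nlinarith
        _ ≤ Real.sqrt ‖A‖ * (M ^ k * ‖u‖) := by
            have h3 := Real.sqrt_nonneg ‖A‖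
            have h4 := norm_nonneg u
            nlinarith
        _ = C * M ^ k := by ring
  -- main claim
  have hclaim : f 1 ≤ M * f 0 := by
    rcases eq_or_lt_of_le (hfnn 0) with h0 | h0
    · have h2 := hstep 1
      rw [← h0] at h2
      simp at h2
      have hf1 : f 1 ≤ 0 := by nlinarith [hfnn 1]
      rw [← h0, mul_zero]
      exact hf1
    · by_contra hcon
      push_neg at hcon
      set r := f 1 / (M * f 0) with hr
      have hMf0 : 0 < M * f 0 := mul_pos hM0 h0
      have hr1 : 1 < r := by
        rw [hr, lt_div_iff₀ hMf0]
        linarith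
      have hind : ∀ n : ℕ, f 1 ^ (2 ^ n) * f 0 ≤ f (2 ^ n) * f 0 ^ (2 ^ n) := by
        intro n
        induction n with
        | zero => simp
        | succ n ih =>
          have e1 : (2 : ℕ) ^ (n + 1) = 2 * 2 ^ n := by ring
          have h2 := hstep (2 ^ n)
          have lhs : f 1 ^ (2 ^ (n + 1)) * f 0 ^ 2 = (f 1 ^ (2 ^ n) * f 0) ^ 2 := by
            rw [e1]; ring
          have step1 : (f 1 ^ (2 ^ n) * f 0) ^ 2 ≤ (f (2 ^ n) * f 0 ^ (2 ^ n)) ^ 2 := by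
            apply pow_le_pow_left₀ (mul_nonneg (pow_nonneg (hfnn 1) _) (hfnn 0)) ih
          have step2 : (f (2 ^ n) * f 0 ^ (2 ^ n)) ^ 2 ≤ f 0 * f (2 ^ (n + 1)) * f 0 ^ (2 * 2 ^ n) := by
            have : f (2 ^ n) ^ 2 ≤ f 0 * f (2 * 2 ^ n) := hstep (2 ^ n)
            have hp : (0:ℝ) ≤ f 0 ^ (2 * 2 ^ n) := by positivity
            calc (f (2 ^ n) * f 0 ^ (2 ^ n)) ^ 2 = f (2 ^ n) ^ 2 * f 0 ^ (2 * 2 ^ n) := by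
                  rw [mul_pow, ← pow_mul]; ring_nf
              _ ≤ f 0 * f (2 * 2 ^ n) * f 0 ^ (2 * 2 ^ n) := by
                  apply mul_le_mul_of_nonneg_right this hp
              _ = f 0 * f (2 ^ (n + 1)) * f 0 ^ (2 * 2 ^ n) := by rw [← e1]
          have final : f 1 ^ (2 ^ (n + 1)) * f 0 ^ 2 ≤ f (2 ^ (n + 1)) * f 0 ^ (2 ^ (n + 1)) * f 0 := by
            calc f 1 ^ (2 ^ (n + 1)) * f 0 ^ 2 ≤ f 0 * f (2 ^ (n + 1)) * f 0 ^ (2 * 2 ^ n) := by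
                  rw [lhs]; exact step1.trans step2
              _ = f (2 ^ (n + 1)) * f 0 ^ (2 ^ (n + 1)) * f 0 := by rw [e1]; ring
          have := mul_le_mul_of_nonneg_right final (le_of_lt (inv_pos.mpr h0))
          calc f 1 ^ (2 ^ (n + 1)) * f 0
              = f 1 ^ (2 ^ (n + 1)) * f 0 ^ 2 * (f 0)⁻¹ := by
                field_simp
            _ ≤ f (2 ^ (n + 1)) * f 0 ^ (2 ^ (n + 1)) * f 0 * (f 0)⁻¹ := this
            _ = f (2 ^ (n + 1)) * f 0 ^ (2 ^ (n + 1)) := by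
                field_simp
      -- get contradiction
      obtain ⟨n, hn⟩ := pow_unbounded_of_one_lt (C / f 0) hr1
      have hrn : r ^ n ≤ r ^ (2 ^ n) := by
        apply pow_le_pow_right₀ (le_of_lt hr1)
        exact le_of_lt (Nat.lt_two_pow_self (n := n))
      have hkey : r ^ (2 ^ n) * f 0 ≤ C := by
        have h1 : f 1 ^ (2 ^ n) * f 0 ≤ C * M ^ (2 ^ n) * f 0 ^ (2 ^ n) := by
          calc f 1 ^ (2 ^ n) * f 0 ≤ f (2 ^ n) * f 0 ^ (2 ^ n) := hind n
            _ ≤ C * M ^ (2 ^ n) * f 0 ^ (2 ^ n) := by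
                apply mul_le_mul_of_nonneg_right (hcrude (2 ^ n)) (by positivity)
        have hf1r : f 1 = r * (M * f 0) := by
          rw [hr]
          field_simp
        rw [hf1r, mul_pow, mul_pow] at h1
        have hpos : (0:ℝ) < M ^ (2 ^ n) * f 0 ^ (2 ^ n) := by positivity
        have h2 : r ^ (2 ^ n) * f 0 * (M ^ (2 ^ n) * f 0 ^ (2 ^ n)) ≤ C * (M ^ (2 ^ n) * f 0 ^ (2 ^ n)) := by
          calc r ^ (2 ^ n) * f 0 * (M ^ (2 ^ n) * f 0 ^ (2 ^ n))
              = r ^ (2 ^ n) * (M ^ (2 ^ n) * f 0 ^ (2 ^ n)) * f 0 := by ring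
            _ ≤ C * M ^ (2 ^ n) * f 0 ^ (2 ^ n) := h1
            _ = C * (M ^ (2 ^ n) * f 0 ^ (2 ^ n)) := by ring
        exact le_of_mul_le_mul_right h2 hpos
      have : C < r ^ (2 ^ n) * f 0 := by
        rw [div_lt_iff₀ h0] at hn
        calc C < r ^ n * f 0 := hn
          _ ≤ r ^ (2 ^ n) * f 0 := mul_le_mul_of_nonneg_right hrn (le_of_lt h0)
      linarith
  -- conclude
  have hXu : normA A (X u) ^ 2 ≤ M * normA A u ^ 2 := by
    have e : innA A (X u) (X u) = innA A u (T u) := h u (X u)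
    calc normA A (X u) ^ 2 = (innA A (X u) (X u)).re := normA_sq A hA _
      _ = (innA A u (T u)).re := by rw [e]
      _ ≤ ‖innA A u (T u)‖ := Complex.re_le_norm _
      _ ≤ normA A u * normA A (T u) := abs_innA_le A hA _ _
      _ = f 0 * f 1 := by
          simp [hf, hf0]
      _ ≤ f 0 * (M * f 0) := by
          apply mul_le_mul_of_nonneg_left hclaim (hfnn 0)
      _ = M * normA A u ^ 2 := by rw [hf0]; ring
  calc normA A (X u) = Real.sqrt (normA A (X u) ^ 2) := (Real.sqrt_sq (normA_nonneg A _)).symm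
    _ ≤ Real.sqrt (M * normA A u ^ 2) := Real.sqrt_le_sqrt hXu
    _ = Real.sqrt M * normA A u := by
        rw [Real.sqrt_mul (le_of_lt hM0), Real.sqrt_sq (normA_nonneg A u)]

lemma opNormA_nonneg (A T : H →L[ℂ] H) : 0 ≤ opNormA A T := by
  apply Real.sSup_nonneg
  rintro r ⟨x, hx, rfl⟩
  exact normA_nonneg A (T x)

lemma normA_apply_le_opNormA [CompleteSpace H] {A X : H →L[ℂ] H} (hA : A.IsPositive)
    (hX : ∃ X', IsAAdjointPair A X X') (u : H) :
    normA A (X u) ≤ opNormA A X * normA A u := by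
  obtain ⟨X', hX'⟩ := hX
  set c := Real.sqrt (‖X'.comp X‖ + 1) with hc
  have hb : ∀ v, normA A (X v) ≤ c * normA A v := fun v => normA_apply_le hA hX' v
  have hbdd : BddAbove {r | ∃ x, normA A x = 1 ∧ r = normA A (X x)} := by
    refine ⟨c, ?_⟩
    rintro r ⟨x, hx, rfl⟩
    simpa [hx] using hb x
  rcases eq_or_lt_of_le (normA_nonneg A u) with h0 | h0
  · have h1 : normA A (X u) ≤ 0 := by
      have := hb u
      rw [← h0] at this
      simpa using this
    rw [← h0, mul_zero]
    exact h1
  · set t := normA A u with ht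
    have htne : (t : ℂ) ≠ 0 := by
      simp only [ne_eq, Complex.ofReal_eq_zero]
      exact ne_of_gt h0
    set v := ((t : ℂ))⁻¹ • u with hv
    have hnv : normA A v = 1 := by
      rw [hv, normA_smul, norm_inv, Complex.norm_real, Real.norm_eq_abs, abs_of_pos h0, ← ht]
      field_simp
    have hmem : normA A (X v) ∈ {r | ∃ x, normA A x = 1 ∧ r = normA A (X x)} := ⟨v, hnv, rfl⟩
    have hle := le_csSup hbdd hmem
    have hXv : normA A (X v) = t⁻¹ * normA A (X u) := by
      rw [hv, map_smul, normA_smul, norm_inv, Complex.norm_real, Real.norm_eq_abs, abs_of_pos h0]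
    rw [hXv] at hle
    have := mul_le_mul_of_nonneg_right hle (le_of_lt h0)
    calc normA A (X u) = t⁻¹ * normA A (X u) * t := by field_simp
      _ ≤ opNormA A X * t := this

lemma sqrt_sq_add_sq_eq_abs (u v : ℝ) : Real.sqrt (u ^ 2 + v ^ 2) = ‖(⟨u, v⟩ : ℂ)‖ := by
  rw [Complex.norm_def, Complex.normSq_mk]
  ring_nf

lemma sqrt_triangle (p q r w : ℝ) :
    Real.sqrt ((p + q) ^ 2 + (r + w) ^ 2)
      ≤ Real.sqrt (p ^ 2 + r ^ 2) + Real.sqrt (q ^ 2 + w ^ 2) := by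
  have e : (⟨p, r⟩ : ℂ) + ⟨q, w⟩ = ⟨p + q, r + w⟩ := by
    apply Complex.ext <;> simp
  rw [sqrt_sq_add_sq_eq_abs, sqrt_sq_add_sq_eq_abs, sqrt_sq_add_sq_eq_abs, ← e]
  exact norm_add_le _ _

lemma innA2_self_re [CompleteSpace H] (A : H →L[ℂ] H) (hA : A.IsPositive) (z : H × H) :
    (innA2 A z z).re = normA A z.1 ^ 2 + normA A z.2 ^ 2 := by
  rw [innA2, Complex.add_re, normA_sq A hA, normA_sq A hA]

lemma normA2_sq [CompleteSpace H] (A : H →L[ℂ] H) (hA : A.IsPositive) (z : H × H) :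
    normA2 A z ^ 2 = normA A z.1 ^ 2 + normA A z.2 ^ 2 := by
  rw [normA2, Real.sq_sqrt, innA2_self_re A hA]
  rw [innA2, Complex.add_re]
  have := innA_self_re_nonneg A hA z.1
  have := innA_self_re_nonneg A hA z.2
  linarith

end DW

open DW

lemma key_ineq {NX NY a b c p q : ℝ} (hNX0 : 0 ≤ NX) (hNY0 : 0 ≤ NY)
    (ha0 : 0 ≤ a) (hb0 : 0 ≤ b) (hab : a ^ 2 + b ^ 2 = 1)
    (hp0 : 0 ≤ p) (hq0 : 0 ≤ q) (hp : p ≤ NX * b) (hq : q ≤ NY * a)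
    (hc0 : 0 ≤ c) (hc : c ≤ NX * (a * b) + NY * (a * b)) :
    Real.sqrt (c ^ 2 + (p ^ 2 + q ^ 2) ^ 2)
      ≤ Real.sqrt (NX ^ 2 / 4 + NX ^ 4) + Real.sqrt (NY ^ 2 / 4 + NY ^ 4) := by
  have hab2 : a ^ 2 * b ^ 2 ≤ 1 / 4 := by nlinarith [sq_nonneg (a ^ 2 - b ^ 2)]
  have hb2 : b ^ 2 ≤ 1 := by nlinarith [sq_nonneg a]
  have ha2 : a ^ 2 ≤ 1 := by nlinarith [sq_nonneg b]
  calc Real.sqrt (c ^ 2 + (p ^ 2 + q ^ 2) ^ 2)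
      ≤ Real.sqrt ((NX * (a * b) + NY * (a * b)) ^ 2
          + (NX ^ 2 * b ^ 2 + NY ^ 2 * a ^ 2) ^ 2) := by
        apply Real.sqrt_le_sqrt
        have h1 : c ^ 2 ≤ (NX * (a * b) + NY * (a * b)) ^ 2 := pow_le_pow_left₀ hc0 hc 2
        have h2 : (p ^ 2 + q ^ 2) ^ 2 ≤ (NX ^ 2 * b ^ 2 + NY ^ 2 * a ^ 2) ^ 2 := by
          apply pow_le_pow_left₀ (by positivity)
          have h3 : p ^ 2 ≤ NX ^ 2 * b ^ 2 := by nlinarith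
          have h4 : q ^ 2 ≤ NY ^ 2 * a ^ 2 := by nlinarith
          linarith
        linarith
    _ ≤ Real.sqrt ((NX * (a * b)) ^ 2 + (NX ^ 2 * b ^ 2) ^ 2)
          + Real.sqrt ((NY * (a * b)) ^ 2 + (NY ^ 2 * a ^ 2) ^ 2) :=
        sqrt_triangle _ _ _ _
    _ ≤ Real.sqrt (NX ^ 2 / 4 + NX ^ 4) + Real.sqrt (NY ^ 2 / 4 + NY ^ 4) := by
        have hX1 : (NX * (a * b)) ^ 2 + (NX ^ 2 * b ^ 2) ^ 2 ≤ NX ^ 2 / 4 + NX ^ 4 := by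
          have e1 : NX ^ 2 * (a ^ 2 * b ^ 2) ≤ NX ^ 2 * (1 / 4) :=
            mul_le_mul_of_nonneg_left hab2 (sq_nonneg NX)
          have e2 : (b ^ 2) ^ 2 ≤ 1 := by nlinarith [sq_nonneg b]
          have e3 : NX ^ 4 * (b ^ 2) ^ 2 ≤ NX ^ 4 * 1 :=
            mul_le_mul_of_nonneg_left e2 (by positivity)
          nlinarith
        have hY1 : (NY * (a * b)) ^ 2 + (NY ^ 2 * a ^ 2) ^ 2 ≤ NY ^ 2 / 4 + NY ^ 4 := by
          have e1 : NY ^ 2 * (a ^ 2 * b ^ 2) ≤ NY ^ 2 * (1 / 4) :=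
            mul_le_mul_of_nonneg_left hab2 (sq_nonneg NY)
          have e2 : (a ^ 2) ^ 2 ≤ 1 := by nlinarith [sq_nonneg a]
          have e3 : NY ^ 4 * (a ^ 2) ^ 2 ≤ NY ^ 4 * 1 :=
            mul_le_mul_of_nonneg_left e2 (by positivity)
          nlinarith
        exact add_le_add (Real.sqrt_le_sqrt hX1) (Real.sqrt_le_sqrt hY1)

variable {H : Type*} [NormedAddCommGroup H] [InnerProductSpace ℂ H] [CompleteSpace H]

theorem stmt14 (A X Y : H →L[ℂ] H) (hA : A.IsPositive)
    (hX : ∃ X', IsAAdjointPair A X X') (hY : ∃ Y', IsAAdjointPair A Y Y') :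
    dwA2 A (offDiag X Y) ≤
      Real.sqrt (opNormA A X ^ 2 / 4 + opNormA A X ^ 4) +
        Real.sqrt (opNormA A Y ^ 2 / 4 + opNormA A Y ^ 4) := by
  set NX := opNormA A X with hNX
  set NY := opNormA A Y with hNY
  have hNX0 : 0 ≤ NX := opNormA_nonneg A X
  have hNY0 : 0 ≤ NY := opNormA_nonneg A Y
  have hXb : ∀ u, normA A (X u) ≤ NX * normA A u := fun u => normA_apply_le_opNormA hA hX u
  have hYb : ∀ u, normA A (Y u) ≤ NY * normA A u := fun u => normA_apply_le_opNormA hA hY u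
  have hRHS0 : 0 ≤ Real.sqrt (NX ^ 2 / 4 + NX ^ 4) + Real.sqrt (NY ^ 2 / 4 + NY ^ 4) := by
    positivity
  apply Real.sSup_le _ hRHS0
  rintro r ⟨z, hz, rfl⟩
  set a := normA A z.1 with ha'
  set b := normA A z.2 with hb'
  have ha0 : 0 ≤ a := normA_nonneg A z.1
  have hb0 : 0 ≤ b := normA_nonneg A z.2
  have hab : a ^ 2 + b ^ 2 = 1 := by
    have h1 := congrArg (· ^ 2) hz
    simp only [one_pow] at h1
    rw [← normA2_sq A hA z]
    exact h1
  have hTz1 : (offDiag X Y z).1 = X z.2 := rfl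
  have hTz2 : (offDiag X Y z).2 = Y z.1 := rfl
  set p := normA A (X z.2) with hp'
  set q := normA A (Y z.1) with hq'
  have hp0 : 0 ≤ p := normA_nonneg A _
  have hq0 : 0 ≤ q := normA_nonneg A _
  have hp : p ≤ NX * b := hXb z.2
  have hq : q ≤ NY * a := hYb z.1
  have habs : ‖innA2 A (offDiag X Y z) z‖ ≤ NX * (a * b) + NY * (a * b) := by
    calc ‖innA2 A (offDiag X Y z) z‖
        = ‖innA A (X z.2) z.1 + innA A (Y z.1) z.2‖ := by
          rw [innA2, hTz1, hTz2]
      _ ≤ ‖innA A (X z.2) z.1‖ + ‖innA A (Y z.1) z.2‖ :=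
          norm_add_le _ _
      _ ≤ p * a + q * b := by
          have h1 := abs_innA_le A hA (X z.2) z.1
          have h2 := abs_innA_le A hA (Y z.1) z.2
          rw [← ha', ← hb', ← hp', ← hq'] at *
          linarith
      _ ≤ NX * b * a + NY * a * b := by
          have h1 := mul_le_mul_of_nonneg_right hp ha0
          have h2 := mul_le_mul_of_nonneg_right hq hb0
          linarith
      _ = NX * (a * b) + NY * (a * b) := by ring
  have hn4 : normA2 A (offDiag X Y z) ^ 4 = (p ^ 2 + q ^ 2) ^ 2 := by
    rw [show (4 : ℕ) = 2 * 2 by norm_num, pow_mul, normA2_sq A hA, hTz1, hTz2]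
  rw [hn4]
  exact key_ineq hNX0 hNY0 ha0 hb0 hab hp0 hq0 hp hq (norm_nonneg _) habs
end
end

section
/- Let A be positive semidefinite on H, 𝔸 = diag(A,A), and let U on H⊕H be 𝔸-unitary (i.e., ‖Uz‖_𝔸 = ‖U^♯z‖_𝔸 = ‖z‖_𝔸 for all z, where U^♯ is the 𝔸-adjoint). Then for X, Y A-bounded and any θ ∈ ℝ: dw_𝔸([[0,X],[e^{iθ}Y,0]]) = dw_𝔸([[0,X],[Y,0]]) and dw_𝔸([[0,X],[Y,0]]) = dw_𝔸([[0,Y],[X,0]]). -/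
noncomputable section

open DW

section Aux

variable {H : Type*} [NormedAddCommGroup H] [InnerProductSpace ℂ H]

lemma DW.innA_smul_left_s15 (A : H →L[ℂ] H) (c : ℂ) (x y : H) :
    innA A (c • x) y = (starRingEnd ℂ) c * innA A x y := by
  simp [innA, map_smul, inner_smul_left, mul_comm]

lemma DW.innA_smul_right_s15 (A : H →L[ℂ] H) (c : ℂ) (x y : H) :
    innA A x (c • y) = c * innA A x y := by
  simp [innA, inner_smul_right]

/-- The set whose supremum is `dwA2 A (offDiag X Y)`. -/
def DW.dwSet (A X Y : H →L[ℂ] H) : Set ℝ :=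
  {r | ∃ z, normA2 A z = 1 ∧
    r = Real.sqrt (‖innA2 A ((offDiag X Y) z) z‖ ^ 2
      + normA2 A ((offDiag X Y) z) ^ 4)}

lemma DW.dwA2_offDiag_eq_sSup (A X Y : H →L[ℂ] H) :
    dwA2 A (offDiag X Y) = sSup (dwSet A X Y) := rfl

lemma DW.dwSet_rot_subset (A X Y : H →L[ℂ] H) (θ : ℝ) :
    dwSet A X (Complex.exp (θ * Complex.I) • Y) ⊆ dwSet A X Y := by
  set e := Complex.exp (θ * Complex.I) with he
  set μ := Complex.exp (-(θ/2) * Complex.I) with hμ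
  have hcμ : (starRingEnd ℂ) μ = Complex.exp ((((θ/2 : ℝ)) : ℂ) * Complex.I) := by
    rw [hμ, ← Complex.exp_conj]; congr 1
    simp [Complex.conj_ofReal, map_ofNat]
  have hμμ : (starRingEnd ℂ) μ * μ = 1 := by
    rw [hcμ, hμ, ← Complex.exp_add]
    have h0 : (((θ/2 : ℝ)) : ℂ) * Complex.I + -(↑θ / 2) * Complex.I = 0 := by
      push_cast; ring
    rw [h0, Complex.exp_zero]
  have hce : (starRingEnd ℂ) e = Complex.exp (-θ * Complex.I) := by
    rw [he, ← Complex.exp_conj]; congr 1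
    simp [Complex.conj_ofReal]
  have hμe : (starRingEnd ℂ) μ * (starRingEnd ℂ) e = μ := by
    rw [hcμ, hce, hμ, ← Complex.exp_add]
    congr 1; push_cast; ring
  have hee : (starRingEnd ℂ) e * e = 1 := by
    rw [hce, he, ← Complex.exp_add]
    have h0 : -(θ : ℂ) * Complex.I + (θ : ℂ) * Complex.I = 0 := by ring
    rw [h0, Complex.exp_zero]
  rintro r ⟨⟨a, b⟩, hz, rfl⟩
  refine ⟨(a, μ • b), ?_, ?_⟩
  · -- the seminorm is preserved
    have h2 : innA A (μ • b) (μ • b) = innA A b b := by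
      rw [innA_smul_left_s15, innA_smul_right_s15, ← mul_assoc, hμμ, one_mul]
    simpa [normA2, innA2, h2] using hz
  · -- the Davis–Wielandt quantity is preserved
    have key : innA2 A (offDiag X Y (a, μ • b)) (a, μ • b)
        = (starRingEnd ℂ) μ * innA2 A (offDiag X (e • Y) (a, b)) (a, b) := by
      simp only [innA2, offDiag, ContinuousLinearMap.prod_apply,
        ContinuousLinearMap.comp_apply, ContinuousLinearMap.coe_snd',
        ContinuousLinearMap.coe_fst', ContinuousLinearMap.smul_apply,
        map_smul, innA_smul_left_s15, innA_smul_right_s15]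
      ring_nf
      linear_combination (-1 : ℂ) * (innA A (Y a) b) * hμe
    have habsμ : ‖(starRingEnd ℂ) μ‖ = 1 := by
      rw [hcμ]; exact Complex.norm_exp_ofReal_mul_I _
    have h1 : ‖innA2 A (offDiag X Y (a, μ • b)) (a, μ • b)‖
        = ‖innA2 A (offDiag X (e • Y) (a, b)) (a, b)‖ := by
      rw [key, norm_mul, habsμ, one_mul]
    have h2 : normA2 A (offDiag X Y (a, μ • b))
        = normA2 A (offDiag X (e • Y) (a, b)) := by
      have e1 : innA A (μ • X b) (μ • X b) = innA A (X b) (X b) := by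
        rw [innA_smul_left_s15, innA_smul_right_s15, ← mul_assoc, hμμ, one_mul]
      have e2 : innA A (e • Y a) (e • Y a) = innA A (Y a) (Y a) := by
        rw [innA_smul_left_s15, innA_smul_right_s15, ← mul_assoc, hee, one_mul]
      simp only [normA2, innA2, offDiag, ContinuousLinearMap.prod_apply,
        ContinuousLinearMap.comp_apply, ContinuousLinearMap.coe_snd',
        ContinuousLinearMap.coe_fst', ContinuousLinearMap.smul_apply,
        map_smul, e1, e2]
    rw [h1, h2]

lemma DW.dwSet_rot_eq (A X Y : H →L[ℂ] H) (θ : ℝ) :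
    dwSet A X (Complex.exp (θ * Complex.I) • Y) = dwSet A X Y := by
  refine le_antisymm (dwSet_rot_subset A X Y θ) ?_
  have h := dwSet_rot_subset A X (Complex.exp (θ * Complex.I) • Y) (-θ)
  have hYY : Complex.exp ((-θ : ℝ) * Complex.I) • Complex.exp ((θ : ℝ) * Complex.I) • Y
      = Y := by
    rw [smul_smul, ← Complex.exp_add]
    have : ((-θ : ℝ) : ℂ) * Complex.I + (θ : ℝ) * Complex.I = 0 := by push_cast; ring
    rw [this, Complex.exp_zero, one_smul]
  rwa [hYY] at h

lemma DW.dwSet_swap_subset (A X Y : H →L[ℂ] H) :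
    dwSet A X Y ⊆ dwSet A Y X := by
  rintro r ⟨⟨a, b⟩, hz, rfl⟩
  refine ⟨(b, a), ?_, ?_⟩
  · simpa [normA2, innA2, add_comm] using hz
  · have h1 : innA2 A (offDiag Y X (b, a)) (b, a)
        = innA2 A (offDiag X Y (a, b)) (a, b) := by
      simp [innA2, offDiag, add_comm]
    have h2 : normA2 A (offDiag Y X (b, a)) = normA2 A (offDiag X Y (a, b)) := by
      simp [normA2, innA2, offDiag, add_comm]
    rw [h1, h2]

lemma DW.dwSet_swap_eq (A X Y : H →L[ℂ] H) :
    dwSet A X Y = dwSet A Y X :=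
  le_antisymm (dwSet_swap_subset A X Y) (dwSet_swap_subset A Y X)

end Aux


variable {H : Type*} [NormedAddCommGroup H] [InnerProductSpace ℂ H] [CompleteSpace H]

theorem stmt15 (A X Y : H →L[ℂ] H) (hA : A.IsPositive)
    (hX : IsABounded A X) (hY : IsABounded A Y) (θ : ℝ) :
    dwA2 A (offDiag X (Complex.exp (θ * Complex.I) • Y)) = dwA2 A (offDiag X Y) ∧
      dwA2 A (offDiag X Y) = dwA2 A (offDiag Y X) := by
  refine ⟨?_, ?_⟩
  · rw [DW.dwA2_offDiag_eq_sSup, DW.dwA2_offDiag_eq_sSup, DW.dwSet_rot_eq]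
  · rw [DW.dwA2_offDiag_eq_sSup, DW.dwA2_offDiag_eq_sSup, DW.dwSet_swap_eq]
end
end

section
/- Let A be positive semidefinite and P, Q, X, Y operators admitting A-adjoints. Then for any real t ≠ 0: dw_A(PXQ^♯ ± QYP^♯)² ≤ (t²‖P‖_A² + t⁻²‖Q‖_A²)² · [ (t²‖PX‖_A² + t⁻²‖QY‖_A²)² + α² ], where α = w_𝔸([[0,X],[Y,0]]) is the 𝔸-numerical radius of the block matrix with 𝔸 = diag(A,A). -/
noncomputable section

open DW

set_option linter.unusedSectionVars false
set_option linter.unusedVariables false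
set_option maxHeartbeats 1000000

namespace DWAux

open scoped ComplexConjugate

variable {H : Type*} [NormedAddCommGroup H] [InnerProductSpace ℂ H] [CompleteSpace H]

/-- `B` is a square-root representation of `A`. -/
def SqrtRep (A B : H →L[ℂ] H) : Prop := ∀ x y : H, innA A x y = inner ℂ (B x) (B y)

lemma exists_sqrtRep (A : H →L[ℂ] H) (hA : A.IsPositive) : ∃ B, SqrtRep A B := by
  have hA' : 0 ≤ A := (ContinuousLinearMap.nonneg_iff_isPositive A).2 hA
  refine ⟨CFC.sqrt A, fun x y => ?_⟩
  have h1 : CFC.sqrt A * CFC.sqrt A = A := CFC.sqrt_mul_sqrt_self A hA'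
  have hsa : IsSelfAdjoint (CFC.sqrt A) := IsSelfAdjoint.of_nonneg (CFC.sqrt_nonneg A)
  show (inner ℂ (A x) y : ℂ) = _
  conv_lhs => rw [← h1]
  rw [ContinuousLinearMap.mul_apply, ← ContinuousLinearMap.adjoint_inner_right,
    ContinuousLinearMap.isSelfAdjoint_iff'.mp hsa]

variable {A B : H →L[ℂ] H}

lemma normA_eq (hB : SqrtRep A B) (x : H) : normA A x = ‖B x‖ := by
  have h := inner_self_eq_norm_sq (𝕜 := ℂ) (B x)
  rw [RCLike.re_to_complex] at h
  rw [normA, hB, h, Real.sqrt_sq (norm_nonneg _)]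

lemma normA_nonneg (A : H →L[ℂ] H) (x : H) : 0 ≤ normA A x := Real.sqrt_nonneg _

lemma innA_abs_le (hB : SqrtRep A B) (x y : H) :
    ‖innA A x y‖ ≤ normA A x * normA A y := by
  rw [hB, normA_eq hB, normA_eq hB]
  exact norm_inner_le_norm _ _

lemma normA_smul (hB : SqrtRep A B) (c : ℂ) (x : H) :
    normA A (c • x) = ‖c‖ * normA A x := by
  rw [normA_eq hB, normA_eq hB, map_smul, norm_smul]

lemma adj_symm (hB : SqrtRep A B) {T T' : H →L[ℂ] H} (h : IsAAdjointPair A T T') :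
    IsAAdjointPair A T' T := by
  intro x y
  have h1 : innA A y (T' x) = innA A (T y) x := (h y x).symm
  calc innA A (T' x) y = conj (innA A y (T' x)) := by
        rw [hB, hB]; exact (inner_conj_symm _ _).symm
    _ = conj (innA A (T y) x) := by rw [h1]
    _ = innA A x (T y) := by rw [hB, hB]; exact inner_conj_symm _ _

lemma normA_sq_eq (hB : SqrtRep A B) (x : H) : normA A x ^ 2 = (innA A x x).re := by
  have h := inner_self_eq_norm_sq (𝕜 := ℂ) (B x)
  rw [RCLike.re_to_complex] at h
  rw [normA_eq hB, hB, h]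

/-- `normA` is bounded by the usual norm. -/
lemma normA_le_norm (hB : SqrtRep A B) (x : H) :
    normA A x ≤ Real.sqrt ‖A‖ * ‖x‖ := by
  have h1 : (innA A x x).re ≤ ‖A‖ * ‖x‖ ^ 2 := by
    calc (innA A x x).re ≤ ‖innA A x x‖ := Complex.re_le_norm _
      _ = ‖(inner ℂ (A x) x : ℂ)‖ := rfl
      _ ≤ ‖A x‖ * ‖x‖ := norm_inner_le_norm _ _
      _ ≤ ‖A‖ * ‖x‖ * ‖x‖ := by
          have := A.le_opNorm x
          nlinarith [norm_nonneg x, norm_nonneg (A x)]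
      _ = ‖A‖ * ‖x‖ ^ 2 := by ring
  calc normA A x = Real.sqrt (innA A x x).re := rfl
    _ ≤ Real.sqrt (‖A‖ * ‖x‖ ^ 2) := Real.sqrt_le_sqrt h1
    _ = Real.sqrt ‖A‖ * ‖x‖ := by
        rw [Real.sqrt_mul (norm_nonneg A), Real.sqrt_sq (norm_nonneg x)]

section SelfAdj

variable {S : H →L[ℂ] H} (hB : SqrtRep A B)
  (hS : ∀ x y, innA A (S x) y = innA A x (S y))

include hB hS

lemma pow_selfadj : ∀ n, ∀ x y, innA A ((S ^ n) x) y = innA A x ((S ^ n) y) := by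
  intro n
  induction n with
  | zero => intro x y; simp
  | succ n ih =>
    intro x y
    have e1 : (S ^ (n + 1)) x = (S ^ n) (S x) := by
      rw [pow_succ, ContinuousLinearMap.mul_apply]
    have e2 : (S ^ (n + 1)) y = S ((S ^ n) y) := by
      rw [pow_succ', ContinuousLinearMap.mul_apply]
    rw [e1, e2, ih, hS]

lemma sq_le_double (m : ℕ) (x : H) :
    normA A ((S ^ m) x) ^ 2 ≤ normA A x * normA A ((S ^ (m + m)) x) := by
  have e : (S ^ (m + m)) x = (S ^ m) ((S ^ m) x) := by
    rw [pow_add, ContinuousLinearMap.mul_apply]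
  calc normA A ((S ^ m) x) ^ 2 = (innA A ((S ^ m) x) ((S ^ m) x)).re :=
        normA_sq_eq hB _
    _ = (innA A x ((S ^ m) ((S ^ m) x))).re := by rw [pow_selfadj hB hS m]
    _ ≤ ‖innA A x ((S ^ m) ((S ^ m) x))‖ := Complex.re_le_norm _
    _ ≤ normA A x * normA A ((S ^ m) ((S ^ m) x)) := innA_abs_le hB _ _
    _ = normA A x * normA A ((S ^ (m + m)) x) := by rw [e]

lemma iter (x : H) :
    ∀ n : ℕ, normA A (S x) ^ (2 ^ n) * normA A x ≤
      normA A x ^ (2 ^ n) * normA A ((S ^ (2 ^ n)) x) := by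
  intro n
  induction n with
  | zero => simp [mul_comm]
  | succ n ih =>
    rcases eq_or_lt_of_le (normA_nonneg A x) with hx0 | hx0
    · rw [← hx0, mul_zero]
      have := normA_nonneg A ((S ^ (2 ^ (n+1))) x)
      have h0 : (0:ℝ) ^ (2 ^ (n+1)) = 0 := zero_pow (pow_ne_zero _ two_ne_zero)
      rw [h0, zero_mul]
    have h1 : (normA A (S x) ^ (2 ^ n) * normA A x) ^ 2 ≤
        (normA A x ^ (2 ^ n) * normA A ((S ^ (2 ^ n)) x)) ^ 2 := by
      apply pow_le_pow_left₀ (mul_nonneg (pow_nonneg (normA_nonneg A _) _) (normA_nonneg A _)) ih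
    have h2 := sq_le_double hB hS (2 ^ n) x
    have e : (2 : ℕ) ^ (n + 1) = 2 ^ n + 2 ^ n := by ring
    have key : normA A (S x) ^ (2 ^ (n + 1)) * (normA A x * normA A x) ≤
        normA A x ^ (2 ^ (n + 1)) * normA A ((S ^ (2 ^ (n + 1))) x) * normA A x := by
      calc normA A (S x) ^ (2 ^ (n + 1)) * (normA A x * normA A x)
          = (normA A (S x) ^ (2 ^ n) * normA A x) ^ 2 := by rw [e]; ring
        _ ≤ (normA A x ^ (2 ^ n) * normA A ((S ^ (2 ^ n)) x)) ^ 2 := h1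
        _ = normA A x ^ (2 ^ n + 2 ^ n) * normA A ((S ^ (2 ^ n)) x) ^ 2 := by ring
        _ ≤ normA A x ^ (2 ^ n + 2 ^ n) *
              (normA A x * normA A ((S ^ (2 ^ n + 2 ^ n)) x)) := by
            exact mul_le_mul_of_nonneg_left h2 (pow_nonneg (normA_nonneg A x) _)
        _ = normA A x ^ (2 ^ (n + 1)) * normA A ((S ^ (2 ^ (n + 1))) x) * normA A x := by
            rw [e]; ring
    calc normA A (S x) ^ (2 ^ (n + 1)) * normA A x
        = normA A (S x) ^ (2 ^ (n + 1)) * (normA A x * normA A x) / normA A x := by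
          field_simp
      _ ≤ normA A x ^ (2 ^ (n + 1)) * normA A ((S ^ (2 ^ (n + 1))) x) * normA A x /
            normA A x := (div_le_div_iff_of_pos_right hx0).mpr key
      _ = normA A x ^ (2 ^ (n + 1)) * normA A ((S ^ (2 ^ (n + 1))) x) := by
          field_simp

lemma selfadj_bound (x : H) : normA A (S x) ≤ ‖S‖ * normA A x := by
  rcases eq_or_lt_of_le (normA_nonneg A x) with hx0 | hx0
  · -- normA x = 0
    have h2 := sq_le_double hB hS 0 x
    simp only [pow_zero, pow_one, one_mul] at h2
    have e : (S ^ (0 + 0 : ℕ)) = (1 : H →L[ℂ] H) := by norm_num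
    have h2' : normA A ((S ^ (1:ℕ)) x) ^ 2 ≤ normA A x * normA A ((S ^ (1+1:ℕ)) x) :=
      sq_le_double hB hS 1 x
    rw [pow_one] at h2'
    rw [← hx0, zero_mul] at h2'
    have : normA A (S x) = 0 := by
      have := normA_nonneg A (S x)
      nlinarith
    rw [this, ← hx0, mul_zero]
  · by_contra hcon
    push_neg at hcon
    set a := normA A (S x) with ha
    set b := ‖S‖ * normA A x with hb
    have hb0 : 0 ≤ b := mul_nonneg (norm_nonneg S) (le_of_lt hx0)
    have ha0 : 0 < a := lt_of_le_of_lt hb0 hcon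
    -- key bound for all n
    have hkey : ∀ n : ℕ, a ^ (2 ^ n) ≤ b ^ (2 ^ n) * (Real.sqrt ‖A‖ * ‖x‖ / normA A x) := by
      intro n
      have h1 := iter hB hS x n
      have h2 : normA A ((S ^ (2 ^ n)) x) ≤ Real.sqrt ‖A‖ * (‖S‖ ^ (2 ^ n) * ‖x‖) := by
        calc normA A ((S ^ (2 ^ n)) x) ≤ Real.sqrt ‖A‖ * ‖(S ^ (2 ^ n)) x‖ :=
              normA_le_norm hB _
          _ ≤ Real.sqrt ‖A‖ * (‖S ^ (2 ^ n)‖ * ‖x‖) := by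
              apply mul_le_mul_of_nonneg_left ((S ^ (2 ^ n)).le_opNorm x) (Real.sqrt_nonneg _)
          _ ≤ Real.sqrt ‖A‖ * (‖S‖ ^ (2 ^ n) * ‖x‖) := by
              apply mul_le_mul_of_nonneg_left _ (Real.sqrt_nonneg _)
              exact mul_le_mul_of_nonneg_right (norm_pow_le' S (by positivity)) (norm_nonneg x)
      have h3 : a ^ (2 ^ n) * normA A x ≤
          normA A x ^ (2 ^ n) * (Real.sqrt ‖A‖ * (‖S‖ ^ (2 ^ n) * ‖x‖)) :=
        le_trans h1 (mul_le_mul_of_nonneg_left h2 (pow_nonneg (le_of_lt hx0) _))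
      have e1 : b ^ (2 ^ n) * (Real.sqrt ‖A‖ * ‖x‖ / normA A x) * normA A x =
          normA A x ^ (2 ^ n) * (Real.sqrt ‖A‖ * (‖S‖ ^ (2 ^ n) * ‖x‖)) := by
        rw [hb, mul_pow]
        field_simp
      have := h3.trans_eq e1.symm
      exact le_of_mul_le_mul_right this hx0
    rcases eq_or_lt_of_le hb0 with hb1 | hb1
    · have := hkey 0
      rw [pow_zero, pow_one, pow_one, ← hb1, zero_mul] at this
      linarith
    · set r := a / b with hr
      have hr1 : 1 < r := (one_lt_div hb1).mpr hcon
      obtain ⟨n, hn⟩ := pow_unbounded_of_one_lt (Real.sqrt ‖A‖ * ‖x‖ / normA A x) hr1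
      have h4 : r ^ n ≤ r ^ (2 ^ n) :=
        pow_le_pow_right₀ (le_of_lt hr1) (le_of_lt (Nat.lt_two_pow_self (n := n)))
      have h5 : r ^ (2 ^ n) ≤ Real.sqrt ‖A‖ * ‖x‖ / normA A x := by
        rw [hr, div_pow, div_le_iff₀ (by positivity)]
        linarith [hkey n]
      linarith
end SelfAdj

lemma abdd (hB : SqrtRep A B) {T T' : H →L[ℂ] H} (h : IsAAdjointPair A T T') (x : H) :
    normA A (T x) ≤ Real.sqrt ‖T' * T‖ * normA A x := by
  set S := T' * T with hSdef
  have hsa : ∀ x y, innA A (S x) y = innA A x (S y) := by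
    intro u v
    have h' := adj_symm hB h
    calc innA A (S u) v = innA A (T' (T u)) v := rfl
      _ = innA A (T u) (T v) := h' _ _
      _ = innA A u (T' (T v)) := h _ _
      _ = innA A u (S v) := rfl
  have h1 : normA A (T x) ^ 2 ≤ normA A x * normA A (S x) := by
    have e : normA A (T x) ^ 2 = (innA A (T x) (T x)).re := normA_sq_eq hB _
    calc normA A (T x) ^ 2 = (innA A (T x) (T x)).re := e
      _ = (innA A x (S x)).re := by rw [h x (T x)]; rfl
      _ ≤ ‖innA A x (S x)‖ := Complex.re_le_norm _
      _ ≤ normA A x * normA A (S x) := innA_abs_le hB _ _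
  have h2 : normA A (S x) ≤ ‖S‖ * normA A x := selfadj_bound hB hsa x
  have h3 : normA A (T x) ^ 2 ≤ ‖S‖ * normA A x ^ 2 := by
    calc normA A (T x) ^ 2 ≤ normA A x * normA A (S x) := h1
      _ ≤ normA A x * (‖S‖ * normA A x) :=
          mul_le_mul_of_nonneg_left h2 (normA_nonneg A x)
      _ = ‖S‖ * normA A x ^ 2 := by ring
  calc normA A (T x) = Real.sqrt (normA A (T x) ^ 2) :=
        (Real.sqrt_sq (normA_nonneg A _)).symm
    _ ≤ Real.sqrt (‖S‖ * normA A x ^ 2) := Real.sqrt_le_sqrt h3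
    _ = Real.sqrt ‖S‖ * normA A x := by
        rw [Real.sqrt_mul (norm_nonneg S), Real.sqrt_sq (normA_nonneg A _)]



section OpNorm

variable {T T' : H →L[ℂ] H} {c : ℝ}

lemma opNormA_nonneg (A T : H →L[ℂ] H) : 0 ≤ opNormA A T :=
  Real.sSup_nonneg (by rintro r ⟨x, hx, rfl⟩; exact normA_nonneg A _)

lemma opNormA_bddAbove (hc : ∀ x, normA A (T x) ≤ c * normA A x) :
    BddAbove {r | ∃ x, normA A x = 1 ∧ r = normA A (T x)} := by
  refine ⟨c, ?_⟩
  rintro r ⟨x, hx, rfl⟩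
  simpa [hx] using hc x

lemma le_opNormA (hc : ∀ x, normA A (T x) ≤ c * normA A x) {x : H}
    (hx : normA A x = 1) : normA A (T x) ≤ opNormA A T :=
  le_csSup (opNormA_bddAbove hc) ⟨x, hx, rfl⟩

lemma opNormA_mul (hB : SqrtRep A B) (hc : ∀ x, normA A (T x) ≤ c * normA A x)
    (x : H) : normA A (T x) ≤ opNormA A T * normA A x := by
  rcases eq_or_lt_of_le (normA_nonneg A x) with hx0 | hx0
  · have h1 : normA A (T x) ≤ 0 := by
      have := hc x
      rw [← hx0, mul_zero] at this
      exact this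
    have h2 : normA A (T x) = 0 := le_antisymm h1 (normA_nonneg A _)
    rw [h2, ← hx0, mul_zero]
  · set r := normA A x with hr
    set u := ((r : ℂ))⁻¹ • x with hu
    have hnr : ‖((r : ℂ))⁻¹‖ = r⁻¹ := by
      rw [norm_inv, Complex.norm_real, Real.norm_eq_abs, abs_of_pos hx0]
    have hu1 : normA A u = 1 := by
      rw [hu, normA_smul hB, hnr, ← hr, inv_mul_cancel₀ (ne_of_gt hx0)]
    have h1 : normA A (T u) ≤ opNormA A T := le_opNormA hc hu1
    have h2 : normA A (T u) = r⁻¹ * normA A (T x) := by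
      rw [hu, map_smul, normA_smul hB, hnr]
    rw [h2] at h1
    calc normA A (T x) = r * (r⁻¹ * normA A (T x)) := by
          field_simp
      _ ≤ r * opNormA A T := mul_le_mul_of_nonneg_left h1 (le_of_lt hx0)
      _ = opNormA A T * normA A x := by rw [mul_comm, hr]

lemma adj_le (hB : SqrtRep A B) (h : IsAAdjointPair A T T') (y : H) :
    normA A (T' y) ≤ opNormA A T * normA A y := by
  have hcT : ∀ x, normA A (T x) ≤ Real.sqrt ‖T' * T‖ * normA A x := abdd hB h
  have h' : IsAAdjointPair A T' T := adj_symm hB h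
  rcases eq_or_lt_of_le (normA_nonneg A (T' y)) with hz | hz
  · rw [← hz]
    exact mul_nonneg (opNormA_nonneg A T) (normA_nonneg A y)
  · have h1 : normA A (T' y) ^ 2 ≤ normA A y * (opNormA A T * normA A (T' y)) := by
      calc normA A (T' y) ^ 2 = (innA A (T' y) (T' y)).re := normA_sq_eq hB _
        _ = (innA A y (T (T' y))).re := by rw [h' y (T' y)]
        _ ≤ ‖innA A y (T (T' y))‖ := Complex.re_le_norm _
        _ ≤ normA A y * normA A (T (T' y)) := innA_abs_le hB _ _
        _ ≤ normA A y * (opNormA A T * normA A (T' y)) :=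
            mul_le_mul_of_nonneg_left (opNormA_mul hB hcT _) (normA_nonneg A y)
    have h2 : normA A (T' y) * normA A (T' y) ≤
        (opNormA A T * normA A y) * normA A (T' y) := by nlinarith
    exact le_of_mul_le_mul_right h2 hz

end OpNorm

section Prod2

/-- The square-root representation on `H × H`, valued in the `L²` product. -/
def beta (B : H →L[ℂ] H) (z : H × H) : WithLp 2 (H × H) :=
  (WithLp.equiv 2 (H × H)).symm (B z.1, B z.2)

variable {S2 : H × H →L[ℂ] H × H} {c : ℝ}

lemma innA2_eq (hB : SqrtRep A B) (z w : H × H) :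
    innA2 A z w = inner ℂ (beta B z) (beta B w) := by
  rw [innA2, hB, hB, beta, beta, WithLp.prod_inner_apply]
  simp

lemma normA2_eq (hB : SqrtRep A B) (z : H × H) : normA2 A z = ‖beta B z‖ := by
  have h := inner_self_eq_norm_sq (𝕜 := ℂ) (beta B z)
  rw [RCLike.re_to_complex] at h
  rw [normA2, show innA2 A z z = inner ℂ (beta B z) (beta B z) from innA2_eq hB z z, h,
    Real.sqrt_sq (norm_nonneg _)]

lemma beta_smul (B : H →L[ℂ] H) (c : ℂ) (z : H × H) :
    beta B (c • z) = c • beta B z := by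
  simp only [beta, Prod.smul_fst, Prod.smul_snd, map_smul]
  rfl

lemma innA2_abs_le (hB : SqrtRep A B) (z w : H × H) :
    ‖innA2 A z w‖ ≤ normA2 A z * normA2 A w := by
  rw [innA2_eq hB, normA2_eq hB, normA2_eq hB]
  exact norm_inner_le_norm _ _

lemma normA2_smul (hB : SqrtRep A B) (c : ℂ) (z : H × H) :
    normA2 A (c • z) = ‖c‖ * normA2 A z := by
  rw [normA2_eq hB, normA2_eq hB, beta_smul, norm_smul]

lemma normA2_nonneg (A : H →L[ℂ] H) (z : H × H) : 0 ≤ normA2 A z := Real.sqrt_nonneg _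

lemma normA2_sq (hB : SqrtRep A B) (z : H × H) :
    normA2 A z ^ 2 = normA A z.1 ^ 2 + normA A z.2 ^ 2 := by
  have h1 : (innA2 A z z).re = normA A z.1 ^ 2 + normA A z.2 ^ 2 := by
    rw [innA2, Complex.add_re, ← normA_sq_eq hB, ← normA_sq_eq hB]
  rw [normA2, h1, Real.sq_sqrt (by positivity)]

lemma wA2_nonneg (A : H →L[ℂ] H) (S2 : H × H →L[ℂ] H × H) : 0 ≤ wA2 A S2 :=
  Real.sSup_nonneg (by rintro r ⟨z, hz, rfl⟩; exact norm_nonneg _)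

lemma wA2_bddAbove (hB : SqrtRep A B) (hc : ∀ z, normA2 A (S2 z) ≤ c * normA2 A z) :
    BddAbove {r | ∃ z, normA2 A z = 1 ∧ r = ‖innA2 A (S2 z) z‖} := by
  refine ⟨c, ?_⟩
  rintro r ⟨z, hz, rfl⟩
  calc ‖innA2 A (S2 z) z‖ ≤ normA2 A (S2 z) * normA2 A z :=
        innA2_abs_le hB _ _
    _ ≤ (c * normA2 A z) * normA2 A z :=
        mul_le_mul_of_nonneg_right (hc z) (normA2_nonneg A z)
    _ = c := by rw [hz]; ring

lemma le_wA2 (hB : SqrtRep A B) (hc : ∀ z, normA2 A (S2 z) ≤ c * normA2 A z)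
    (z : H × H) : ‖innA2 A (S2 z) z‖ ≤ wA2 A S2 * normA2 A z ^ 2 := by
  rcases eq_or_lt_of_le (normA2_nonneg A z) with hz0 | hz0
  · have h1 : ‖innA2 A (S2 z) z‖ ≤ 0 := by
      calc ‖innA2 A (S2 z) z‖ ≤ normA2 A (S2 z) * normA2 A z :=
            innA2_abs_le hB _ _
        _ = 0 := by rw [← hz0, mul_zero]
    rw [← hz0]
    calc ‖innA2 A (S2 z) z‖ ≤ 0 := h1
      _ ≤ wA2 A S2 * 0 ^ 2 := by simp
  · set r := normA2 A z with hr
    set u := ((r : ℂ))⁻¹ • z with hu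
    have hnr : ‖((r : ℂ))⁻¹‖ = r⁻¹ := by
      rw [norm_inv, Complex.norm_real, Real.norm_eq_abs, abs_of_pos hz0]
    have hu1 : normA2 A u = 1 := by
      rw [hu, normA2_smul hB, hnr, ← hr, inv_mul_cancel₀ (ne_of_gt hz0)]
    have h1 : ‖innA2 A (S2 u) u‖ ≤ wA2 A S2 :=
      le_csSup (wA2_bddAbove hB hc) ⟨u, hu1, rfl⟩
    have h2 : innA2 A (S2 u) u = (starRingEnd ℂ) ((r : ℂ))⁻¹ * (((r : ℂ))⁻¹ * innA2 A (S2 z) z) := by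
      rw [hu, map_smul, innA2_eq hB, beta_smul, beta_smul]
      simp only [inner_smul_left, inner_smul_right]
      rw [← innA2_eq hB]
      ring
    have h3 : ‖innA2 A (S2 u) u‖ = r⁻¹ * (r⁻¹ * ‖innA2 A (S2 z) z‖) := by
      rw [h2, norm_mul, norm_mul, RCLike.norm_conj, hnr]
    rw [h3] at h1
    have h4 : r⁻¹ * (r⁻¹ * ‖innA2 A (S2 z) z‖) * r ^ 2 ≤ wA2 A S2 * r ^ 2 :=
      mul_le_mul_of_nonneg_right h1 (by positivity)
    calc ‖innA2 A (S2 z) z‖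
        = r⁻¹ * (r⁻¹ * ‖innA2 A (S2 z) z‖) * r ^ 2 := by
          rw [pow_two]
          have hrne : r ≠ 0 := ne_of_gt hz0
          field_simp
      _ ≤ wA2 A S2 * r ^ 2 := h4

lemma offDiag_apply (X Y : H →L[ℂ] H) (z : H × H) :
    offDiag X Y z = (X z.2, Y z.1) := rfl

lemma offDiag_bdd (hB : SqrtRep A B) {X Y : H →L[ℂ] H} {cX cY : ℝ}
    (hcX0 : 0 ≤ cX) (hcY0 : 0 ≤ cY)
    (hXb : ∀ x, normA A (X x) ≤ cX * normA A x)
    (hYb : ∀ x, normA A (Y x) ≤ cY * normA A x) (z : H × H) :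
    normA2 A (offDiag X Y z) ≤ Real.sqrt (cX ^ 2 + cY ^ 2) * normA2 A z := by
  have h1 : normA2 A (offDiag X Y z) ^ 2 ≤ (cX ^ 2 + cY ^ 2) * normA2 A z ^ 2 := by
    rw [normA2_sq hB, offDiag_apply, normA2_sq hB]
    have h2 := hXb z.2
    have h3 := hYb z.1
    have n1 := normA_nonneg A z.1
    have n2 := normA_nonneg A z.2
    have n3 := normA_nonneg A (X z.2)
    have n4 := normA_nonneg A (Y z.1)
    simp only []
    nlinarith
  calc normA2 A (offDiag X Y z) = Real.sqrt (normA2 A (offDiag X Y z) ^ 2) :=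
        (Real.sqrt_sq (normA2_nonneg A _)).symm
    _ ≤ Real.sqrt ((cX ^ 2 + cY ^ 2) * normA2 A z ^ 2) := Real.sqrt_le_sqrt h1
    _ = Real.sqrt (cX ^ 2 + cY ^ 2) * normA2 A z := by
        rw [Real.sqrt_mul (by positivity), Real.sqrt_sq (normA2_nonneg A _)]

lemma innA_smul_smul (hB : SqrtRep A B) (a b : ℂ) (f g : H) :
    innA A (a • f) (b • g) = (starRingEnd ℂ) a * b * innA A f g := by
  rw [hB, hB, map_smul, map_smul, inner_smul_left, inner_smul_right]
  ring

lemma innA_add_left (hB : SqrtRep A B) (f g y : H) :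
    innA A (f + g) y = innA A f y + innA A g y := by
  rw [hB, hB, hB, map_add, inner_add_left]

lemma innA_sub_left (hB : SqrtRep A B) (f g y : H) :
    innA A (f - g) y = innA A f y - innA A g y := by
  rw [hB, hB, hB, map_sub, inner_sub_left]

lemma normA_add_le (hB : SqrtRep A B) (f g : H) :
    normA A (f + g) ≤ normA A f + normA A g := by
  rw [normA_eq hB, normA_eq hB, normA_eq hB, map_add]
  exact norm_add_le _ _

lemma normA_sub_le (hB : SqrtRep A B) (f g : H) :
    normA A (f - g) ≤ normA A f + normA A g := by
  rw [normA_eq hB, normA_eq hB, normA_eq hB, map_sub]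
  exact norm_sub_le _ _

end Prod2

end DWAux


variable {H : Type*} [NormedAddCommGroup H] [InnerProductSpace ℂ H] [CompleteSpace H]

theorem stmt16 (A P Q X Y P' Q' : H →L[ℂ] H) (hA : A.IsPositive)
    (hP' : IsAAdjointPair A P P') (hQ' : IsAAdjointPair A Q Q')
    (hX : ∃ X', IsAAdjointPair A X X') (hY : ∃ Y', IsAAdjointPair A Y Y')
    (t : ℝ) (ht : t ≠ 0) :
    dwA A (P.comp (X.comp Q') + Q.comp (Y.comp P')) ^ 2 ≤
      (t ^ 2 * opNormA A P ^ 2 + t⁻¹ ^ 2 * opNormA A Q ^ 2) ^ 2 *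
        ((t ^ 2 * opNormA A (P.comp X) ^ 2 + t⁻¹ ^ 2 * opNormA A (Q.comp Y) ^ 2) ^ 2 +
          wA2 A (offDiag X Y) ^ 2) ∧
    dwA A (P.comp (X.comp Q') - Q.comp (Y.comp P')) ^ 2 ≤
      (t ^ 2 * opNormA A P ^ 2 + t⁻¹ ^ 2 * opNormA A Q ^ 2) ^ 2 *
        ((t ^ 2 * opNormA A (P.comp X) ^ 2 + t⁻¹ ^ 2 * opNormA A (Q.comp Y) ^ 2) ^ 2 +
          wA2 A (offDiag X Y) ^ 2) := by
  classical
  obtain ⟨B, hB⟩ := DWAux.exists_sqrtRep A hA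
  obtain ⟨X', hX'⟩ := hX
  obtain ⟨Y', hY'⟩ := hY
  have hXb := DWAux.abdd hB hX'
  have hYb := DWAux.abdd hB hY'
  have hPXadj : IsAAdjointPair A (P.comp X) (X'.comp P') := by
    intro a b
    calc innA A ((P.comp X) a) b = innA A (P (X a)) b := rfl
      _ = innA A (X a) (P' b) := hP' _ _
      _ = innA A a (X' (P' b)) := hX' _ _
  have hQYadj : IsAAdjointPair A (Q.comp Y) (Y'.comp Q') := by
    intro a b
    calc innA A ((Q.comp Y) a) b = innA A (Q (Y a)) b := rfl
      _ = innA A (Y a) (Q' b) := hQ' _ _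
      _ = innA A a (Y' (Q' b)) := hY' _ _
  have hPXb := DWAux.abdd hB hPXadj
  have hQYb := DWAux.abdd hB hQYadj
  have hPXop : ∀ x, normA A ((P.comp X) x) ≤ opNormA A (P.comp X) * normA A x :=
    DWAux.opNormA_mul hB hPXb
  have hQYop : ∀ x, normA A ((Q.comp Y) x) ≤ opNormA A (Q.comp Y) * normA A x :=
    DWAux.opNormA_mul hB hQYb
  have hP'le := DWAux.adj_le hB hP'
  have hQ'le := DWAux.adj_le hB hQ'
  set p := opNormA A P with hp
  set q := opNormA A Q with hq
  set u := opNormA A (P.comp X) with huu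
  set v := opNormA A (Q.comp Y) with hvv
  set w := wA2 A (offDiag X Y) with hww
  have hp0 : 0 ≤ p := DWAux.opNormA_nonneg A P
  have hq0 : 0 ≤ q := DWAux.opNormA_nonneg A Q
  have hu0 : 0 ≤ u := DWAux.opNormA_nonneg A _
  have hv0 : 0 ≤ v := DWAux.opNormA_nonneg A _
  have hw0 : 0 ≤ w := DWAux.wA2_nonneg A _
  set K := t ^ 2 * p ^ 2 + t⁻¹ ^ 2 * q ^ 2 with hK
  set M := t ^ 2 * u ^ 2 + t⁻¹ ^ 2 * v ^ 2 with hM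
  have ht2 : t ^ 2 * t⁻¹ ^ 2 = 1 := by field_simp
  have hK0 : 0 ≤ K := by positivity
  have hM0 : 0 ≤ M := by positivity
  have hoff : ∀ z, normA2 A (offDiag X Y z) ≤
      Real.sqrt (Real.sqrt ‖X' * X‖ ^ 2 + Real.sqrt ‖Y' * Y‖ ^ 2) * normA2 A z :=
    DWAux.offDiag_bdd hB (Real.sqrt_nonneg _) (Real.sqrt_nonneg _) hXb hYb
  have hwle : ∀ z, ‖innA2 A (offDiag X Y z) z‖ ≤ w * normA2 A z ^ 2 :=
    DWAux.le_wA2 hB hoff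
  have htC : ((t : ℝ) : ℂ) ≠ 0 := by exact_mod_cast ht
  -- Claim A : numerical-radius-type bound
  have claimA : ∀ c : ℂ, ‖c‖ = 1 → ∀ x : H, normA A x = 1 →
      ‖innA A (X (Q' x)) (P' x) + c ^ 2 * innA A (Y (P' x)) (Q' x)‖ ≤
        w * K := by
    intro c hc x hx
    set a := innA A (X (Q' x)) (P' x) with ha
    set b := innA A (Y (P' x)) (Q' x) with hb
    set z : H × H := (((t : ℝ) : ℂ) • P' x, (c * ((t : ℝ) : ℂ)⁻¹) • Q' x) with hz
    have e1 : innA2 A (offDiag X Y z) z =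
        (starRingEnd ℂ) (c * ((t : ℝ) : ℂ)⁻¹) * ((t : ℝ) : ℂ) * a +
          (starRingEnd ℂ) (((t : ℝ) : ℂ)) * (c * ((t : ℝ) : ℂ)⁻¹) * b := by
      have st1 : innA2 A (offDiag X Y z) z = innA A (X z.2) z.1 + innA A (Y z.1) z.2 := rfl
      have st2 : X z.2 = (c * ((t : ℝ) : ℂ)⁻¹) • X (Q' x) := map_smul X _ _
      have st3 : Y z.1 = ((t : ℝ) : ℂ) • Y (P' x) := map_smul Y _ _
      rw [st1, st2, st3]
      show innA A ((c * ((t : ℝ) : ℂ)⁻¹) • X (Q' x)) (((t : ℝ) : ℂ) • P' x) +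
        innA A (((t : ℝ) : ℂ) • Y (P' x)) ((c * ((t : ℝ) : ℂ)⁻¹) • Q' x) = _
      rw [DWAux.innA_smul_smul hB, DWAux.innA_smul_smul hB]
    have e2 : innA2 A (offDiag X Y z) z = (starRingEnd ℂ) c * a + c * b := by
      rw [e1]
      have hconj : (starRingEnd ℂ) (((t : ℝ) : ℂ)) = ((t : ℝ) : ℂ) := Complex.conj_ofReal t
      rw [map_mul, map_inv₀, hconj]
      field_simp
    have hcc : c * (starRingEnd ℂ) c = 1 := by
      have := Complex.mul_conj c
      rw [this, Complex.normSq_eq_norm_sq, hc]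
      norm_num
    have e3 : c * innA2 A (offDiag X Y z) z = a + c ^ 2 * b := by
      rw [e2]
      calc c * ((starRingEnd ℂ) c * a + c * b) = (c * (starRingEnd ℂ) c) * a + c ^ 2 * b := by
            ring
        _ = a + c ^ 2 * b := by rw [hcc, one_mul]
    have e4 : ‖a + c ^ 2 * b‖ = ‖innA2 A (offDiag X Y z) z‖ := by
      rw [← e3, norm_mul, hc, one_mul]
    have hz2 : normA2 A z ^ 2 ≤ K := by
      have h1 : normA A z.1 = |t| * normA A (P' x) := by
        show normA A (((t : ℝ) : ℂ) • P' x) = _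
        rw [DWAux.normA_smul hB, Complex.norm_real, Real.norm_eq_abs]
      have h2 : normA A z.2 = |t|⁻¹ * normA A (Q' x) := by
        show normA A ((c * ((t : ℝ) : ℂ)⁻¹) • Q' x) = _
        rw [DWAux.normA_smul hB, norm_mul, hc, one_mul, norm_inv, Complex.norm_real,
          Real.norm_eq_abs]
      have h3 : normA A (P' x) ≤ p := by
        have := hP'le x
        rw [hx, mul_one] at this
        exact this
      have h4 : normA A (Q' x) ≤ q := by
        have := hQ'le x
        rw [hx, mul_one] at this
        exact this
      have h5 := DWAux.normA2_sq hB z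
      rw [h5, h1, h2, hK]
      have habs : |t| ^ 2 = t ^ 2 := sq_abs t
      have habsi : (|t|⁻¹) ^ 2 = t⁻¹ ^ 2 := by
        rw [inv_pow, inv_pow, sq_abs]
      have hn1 := DWAux.normA_nonneg A (P' x)
      have hn2 := DWAux.normA_nonneg A (Q' x)
      have hb1 : (|t| * normA A (P' x)) ^ 2 ≤ t ^ 2 * p ^ 2 := by
        rw [mul_pow, habs]
        exact mul_le_mul_of_nonneg_left (by nlinarith) (by positivity)
      have hb2 : (|t|⁻¹ * normA A (Q' x)) ^ 2 ≤ t⁻¹ ^ 2 * q ^ 2 := by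
        rw [mul_pow, habsi]
        exact mul_le_mul_of_nonneg_left (by nlinarith) (by positivity)
      linarith
    calc ‖a + c ^ 2 * b‖ = ‖innA2 A (offDiag X Y z) z‖ := e4
      _ ≤ w * normA2 A z ^ 2 := hwle z
      _ ≤ w * K := mul_le_mul_of_nonneg_left hz2 hw0
  -- Claim B : norm bound
  have claimB : ∀ x : H, normA A x = 1 →
      normA A (P (X (Q' x))) ≤ u * q ∧ normA A (Q (Y (P' x))) ≤ v * p := by
    intro x hx
    have h4 : normA A (Q' x) ≤ q := by
      have := hQ'le x; rw [hx, mul_one] at this; exact this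
    have h3 : normA A (P' x) ≤ p := by
      have := hP'le x; rw [hx, mul_one] at this; exact this
    constructor
    · calc normA A (P (X (Q' x))) = normA A ((P.comp X) (Q' x)) := rfl
        _ ≤ u * normA A (Q' x) := hPXop _
        _ ≤ u * q := mul_le_mul_of_nonneg_left h4 hu0
    · calc normA A (Q (Y (P' x))) = normA A ((Q.comp Y) (P' x)) := rfl
        _ ≤ v * normA A (P' x) := hQYop _
        _ ≤ v * p := mul_le_mul_of_nonneg_left h3 hv0
  have hsum_sq : (u * q + v * p) ^ 2 ≤ K * M := by
    have e : K * M = (p ^ 2 * v ^ 2 + q ^ 2 * u ^ 2) * (t ^ 2 * t⁻¹ ^ 2) +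
        t ^ 2 * t ^ 2 * p ^ 2 * u ^ 2 + t⁻¹ ^ 2 * t⁻¹ ^ 2 * q ^ 2 * v ^ 2 := by
      rw [hK, hM]; ring
    have e' : K * M = p ^ 2 * v ^ 2 + q ^ 2 * u ^ 2 +
        t ^ 2 * t ^ 2 * p ^ 2 * u ^ 2 + t⁻¹ ^ 2 * t⁻¹ ^ 2 * q ^ 2 * v ^ 2 := by
      rw [e, ht2, mul_one]
    have ht3 : (t ^ 2 * u * p) * (t⁻¹ ^ 2 * v * q) = u * p * v * q := by
      calc (t ^ 2 * u * p) * (t⁻¹ ^ 2 * v * q) = t ^ 2 * t⁻¹ ^ 2 * (u * p * v * q) := by ring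
        _ = u * p * v * q := by rw [ht2, one_mul]
    rw [e']
    nlinarith [sq_nonneg (t ^ 2 * u * p - t⁻¹ ^ 2 * v * q), ht3]
  -- generic assembly
  have main : ∀ T : H →L[ℂ] H,
      (∀ x : H, normA A x = 1 → ‖innA A (T x) x‖ ≤ w * K) →
      (∀ x : H, normA A x = 1 → normA A (T x) ≤ u * q + v * p) →
      dwA A T ^ 2 ≤ K ^ 2 * (M ^ 2 + w ^ 2) := by
    intro T hT1 hT2
    have hRHS0 : (0:ℝ) ≤ K ^ 2 * (M ^ 2 + w ^ 2) := by positivity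
    have hle : dwA A T ≤ Real.sqrt (K ^ 2 * (M ^ 2 + w ^ 2)) := by
      apply Real.sSup_le
      · rintro r ⟨x, hx, rfl⟩
        apply Real.sqrt_le_sqrt
        have h1 := hT1 x hx
        have h2 := hT2 x hx
        have habs0 : 0 ≤ ‖innA A (T x) x‖ := norm_nonneg _
        have hn0 := DWAux.normA_nonneg A (T x)
        have haux1 : ‖innA A (T x) x‖ ^ 2 ≤ (w * K) ^ 2 :=
          pow_le_pow_left₀ habs0 h1 2
        have hsq : normA A (T x) ^ 2 ≤ K * M := by
          have := pow_le_pow_left₀ hn0 h2 2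
          linarith [hsum_sq]
        have haux2 : (normA A (T x) ^ 2) ^ 2 ≤ (K * M) ^ 2 :=
          pow_le_pow_left₀ (sq_nonneg _) hsq 2
        have e : normA A (T x) ^ 4 = (normA A (T x) ^ 2) ^ 2 := by ring
        rw [e]
        nlinarith [haux1, haux2]
      · exact Real.sqrt_nonneg _
    have hnn : 0 ≤ dwA A T :=
      Real.sSup_nonneg (by rintro r ⟨x, hx, rfl⟩; exact Real.sqrt_nonneg _)
    calc dwA A T ^ 2 ≤ Real.sqrt (K ^ 2 * (M ^ 2 + w ^ 2)) ^ 2 :=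
          pow_le_pow_left₀ hnn hle 2
      _ = K ^ 2 * (M ^ 2 + w ^ 2) := Real.sq_sqrt hRHS0
  constructor
  · apply main
    · intro x hx
      have e1 : (P.comp (X.comp Q') + Q.comp (Y.comp P')) x =
          P (X (Q' x)) + Q (Y (P' x)) := rfl
      have e2 : innA A ((P.comp (X.comp Q') + Q.comp (Y.comp P')) x) x =
          innA A (X (Q' x)) (P' x) + innA A (Y (P' x)) (Q' x) := by
        rw [e1, DWAux.innA_add_left hB, hP' (X (Q' x)) x, hQ' (Y (P' x)) x]
      rw [e2]
      have := claimA 1 (by norm_num) x hx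
      simpa using this
    · intro x hx
      have e1 : (P.comp (X.comp Q') + Q.comp (Y.comp P')) x =
          P (X (Q' x)) + Q (Y (P' x)) := rfl
      rw [e1]
      obtain ⟨hb1, hb2⟩ := claimB x hx
      calc normA A (P (X (Q' x)) + Q (Y (P' x))) ≤
            normA A (P (X (Q' x))) + normA A (Q (Y (P' x))) := DWAux.normA_add_le hB _ _
        _ ≤ u * q + v * p := add_le_add hb1 hb2
  · apply main
    · intro x hx
      have e1 : (P.comp (X.comp Q') - Q.comp (Y.comp P')) x =
          P (X (Q' x)) - Q (Y (P' x)) := rfl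
      have e2 : innA A ((P.comp (X.comp Q') - Q.comp (Y.comp P')) x) x =
          innA A (X (Q' x)) (P' x) - innA A (Y (P' x)) (Q' x) := by
        rw [e1, DWAux.innA_sub_left hB, hP' (X (Q' x)) x, hQ' (Y (P' x)) x]
      rw [e2]
      have := claimA Complex.I Complex.norm_I x hx
      rw [Complex.I_sq] at this
      have e3 : innA A (X (Q' x)) (P' x) + (-1 : ℂ) * innA A (Y (P' x)) (Q' x) =
          innA A (X (Q' x)) (P' x) - innA A (Y (P' x)) (Q' x) := by ring
      rw [e3] at this
      exact this
    · intro x hx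
      have e1 : (P.comp (X.comp Q') - Q.comp (Y.comp P')) x =
          P (X (Q' x)) - Q (Y (P' x)) := rfl
      rw [e1]
      obtain ⟨hb1, hb2⟩ := claimB x hx
      calc normA A (P (X (Q' x)) - Q (Y (P' x))) ≤
            normA A (P (X (Q' x))) + normA A (Q (Y (P' x))) := DWAux.normA_sub_le hB _ _
        _ ≤ u * q + v * p := add_le_add hb1 hb2
end
end

section
/- Let A be positive semidefinite on H, 𝔸 = diag(A,A), and X an A-bounded operator. Let 𝕊 = [[0,X],[0,0]] on H⊕H. Then dw_𝔸(𝕊) = ‖X‖_A / (2√(1 − ‖X‖_A²)) if 0 < ‖X‖_A < 1/√2, and dw_𝔸(𝕊) = ‖X‖_A² if ‖X‖_A ≥ 1/√2; also dw_𝔸(𝕊) = 0 if ‖X‖_A = 0. -/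
noncomputable section

open DW
open DW

variable {H : Type*} [NormedAddCommGroup H] [InnerProductSpace ℂ H] [CompleteSpace H]

set_option maxHeartbeats 1600000 in
theorem stmt19 (A X : H →L[ℂ] H) (hA : A.IsPositive) (hX : IsABounded A X)
    (hunit : ∃ x : H, normA A x = 1) :
    (opNormA A X = 0 →
      dwA2 A ((X.comp (ContinuousLinearMap.snd ℂ H H)).prod (0 : H × H →L[ℂ] H)) = 0) ∧
    (0 < opNormA A X → opNormA A X < 1 / Real.sqrt 2 →
      dwA2 A ((X.comp (ContinuousLinearMap.snd ℂ H H)).prod (0 : H × H →L[ℂ] H)) =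
        opNormA A X / (2 * Real.sqrt (1 - opNormA A X ^ 2))) ∧
    (1 / Real.sqrt 2 ≤ opNormA A X →
      dwA2 A ((X.comp (ContinuousLinearMap.snd ℂ H H)).prod (0 : H × H →L[ℂ] H)) =
        opNormA A X ^ 2) := by
  classical
  obtain ⟨c, hc, hXb⟩ := hX
  obtain ⟨x₀, hx₀⟩ := hunit
  set Sop : H × H →L[ℂ] H × H :=
    (X.comp (ContinuousLinearMap.snd ℂ H H)).prod (0 : H × H →L[ℂ] H) with hSopdef
  -- square root of A
  have h0 : (0 : H →L[ℂ] H) ≤ A := (A.nonneg_iff_isPositive).mpr hA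
  set s : H →L[ℂ] H := CFC.sqrt A with hsdef
  have hsmul : s * s = A := CFC.sqrt_mul_sqrt_self A h0
  have hsa : IsSelfAdjoint s := IsSelfAdjoint.of_nonneg (CFC.sqrt_nonneg A)
  have hins : ∀ x y : H, innA A x y = inner ℂ (s x) (s y) := by
    intro x y
    rw [innA, ← hsmul, ContinuousLinearMap.mul_apply,
      ← ContinuousLinearMap.adjoint_inner_right s (s x) y, hsa.adjoint_eq]
  have hre : ∀ x : H, (innA A x x).re = ‖s x‖ ^ 2 := by
    intro x
    rw [hins]
    exact inner_self_eq_norm_sq (𝕜 := ℂ) (s x)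
  have hn : ∀ x : H, normA A x = ‖s x‖ := by
    intro x
    rw [normA, hre]
    exact Real.sqrt_sq (norm_nonneg _)
  have hn2 : ∀ z : H × H, normA2 A z = Real.sqrt (‖s z.1‖ ^ 2 + ‖s z.2‖ ^ 2) := by
    intro z
    rw [normA2, innA2, Complex.add_re, hre, hre]
  clear_value s
  -- the set T defining the A-operator norm of X, and k
  set T : Set ℝ := {r | ∃ x, normA A x = 1 ∧ r = normA A (X x)} with hTdef
  set k : ℝ := opNormA A X with hkdef
  have hkT : k = sSup T := rfl
  clear_value k
  have hTne : T.Nonempty := ⟨normA A (X x₀), x₀, hx₀, rfl⟩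
  have hTbdd : BddAbove T := by
    refine ⟨c, ?_⟩
    rintro r ⟨x, hx, rfl⟩
    simpa [hx] using hXb x
  have hk0 : 0 ≤ k := by
    have h1 : normA A (X x₀) ≤ k := by rw [hkT]; exact le_csSup hTbdd ⟨x₀, hx₀, rfl⟩
    have h2 : 0 ≤ normA A (X x₀) := Real.sqrt_nonneg _
    linarith
  -- the fundamental bound ‖s (X x)‖ ≤ k * ‖s x‖
  have hXk : ∀ x : H, ‖s (X x)‖ ≤ k * ‖s x‖ := by
    intro x
    by_cases hx : ‖s x‖ = 0
    · have h1 : normA A (X x) ≤ c * normA A x := hXb x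
      rw [hn, hn, hx, mul_zero] at h1
      rw [hx, mul_zero]
      exact h1
    · have hxp : 0 < ‖s x‖ := lt_of_le_of_ne (norm_nonneg _) (Ne.symm hx)
      set x' : H := ((‖s x‖⁻¹ : ℝ) : ℂ) • x with hx'def
      have hsx' : s x' = ((‖s x‖⁻¹ : ℝ) : ℂ) • s x := map_smul s _ _
      have hnx' : normA A x' = 1 := by
        rw [hn, hsx', norm_smul, Complex.norm_real, Real.norm_eq_abs,
          abs_of_nonneg (inv_nonneg.2 (norm_nonneg _)), inv_mul_cancel₀ hx]
      have hmem : normA A (X x') ∈ T := ⟨x', hnx', rfl⟩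
      have hle : normA A (X x') ≤ k := by rw [hkT]; exact le_csSup hTbdd hmem
      have hXx' : X x' = ((‖s x‖⁻¹ : ℝ) : ℂ) • X x := map_smul X _ _
      rw [hn, hXx', map_smul, norm_smul, Complex.norm_real, Real.norm_eq_abs,
        abs_of_nonneg (inv_nonneg.2 (norm_nonneg _))] at hle
      rw [← (inv_mul_cancel₀ hx ▸ rfl : ‖s x‖⁻¹ * ‖s x‖ = 1)] at *
      calc ‖s (X x)‖ = (‖s x‖⁻¹ * ‖s (X x)‖) * ‖s x‖ := by field_simp
        _ ≤ k * ‖s x‖ := by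
            apply mul_le_mul_of_nonneg_right hle (norm_nonneg _)
  -- the set defining dwA2
  set SD : Set ℝ := {r | ∃ z, normA2 A z = 1 ∧
      r = Real.sqrt (‖innA2 A (Sop z) z‖ ^ 2 + normA2 A (Sop z) ^ 4)} with hSDdef
  have hdw : dwA2 A Sop = sSup SD := rfl
  have hSapp : ∀ z : H × H, Sop z = (X z.2, 0) := fun _ => rfl
  have hinn0 : ∀ y : H, innA A 0 y = 0 := by
    intro y; rw [innA, map_zero, inner_zero_left]
  have hval1 : ∀ z : H × H, innA2 A (Sop z) z = inner ℂ (s (X z.2)) (s z.1) := by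
    intro z
    rw [hSapp, innA2]
    simp only [hinn0, add_zero]
    exact hins _ _
  have hval2 : ∀ z : H × H, normA2 A (Sop z) = ‖s (X z.2)‖ := by
    intro z
    rw [hSapp, hn2]
    simp [Real.sqrt_sq (norm_nonneg _)]
  -- generic upper bound
  have key_ub : ∀ M : ℝ, 0 ≤ M →
      (∀ u : ℝ, 0 ≤ u → u ≤ 1 → k ^ 2 * u * (1 - u) + k ^ 4 * u ^ 2 ≤ M ^ 2) →
      ∀ r ∈ SD, r ≤ M := by
    rintro M hM hpoly r ⟨z, hz1, rfl⟩
    have hab : ‖s z.1‖ ^ 2 + ‖s z.2‖ ^ 2 = 1 := by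
      rw [hn2] at hz1
      exact Real.sqrt_eq_one.mp hz1
    set a := ‖s z.1‖
    set b := ‖s z.2‖
    set t := ‖s (X z.2)‖ with htdef
    have ht0 : 0 ≤ t := norm_nonneg _
    have ha0 : 0 ≤ a := norm_nonneg _
    have hb0 : 0 ≤ b := norm_nonneg _
    have htk : t ≤ k * b := hXk z.2
    have hCS : ‖innA2 A (Sop z) z‖ ≤ t * a := by
      rw [hval1]
      exact norm_inner_le_norm _ _
    have habs0 : 0 ≤ ‖innA2 A (Sop z) z‖ := norm_nonneg _
    have hE : ‖innA2 A (Sop z) z‖ ^ 2 + normA2 A (Sop z) ^ 4 ≤ M ^ 2 := by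
      rw [hval2, ← htdef]
      have h1 : ‖innA2 A (Sop z) z‖ ^ 2 ≤ (t * a) ^ 2 := by
        apply pow_le_pow_left₀ habs0 hCS
      have h2 : (t * a) ^ 2 + t ^ 4 ≤ (k * b) ^ 2 * a ^ 2 + (k * b) ^ 4 := by
        have := pow_le_pow_left₀ ht0 htk 2
        have := pow_le_pow_left₀ ht0 htk 4
        nlinarith [sq_nonneg a]
      have h3 : (k * b) ^ 2 * a ^ 2 + (k * b) ^ 4 ≤ M ^ 2 := by
        have hb1 : b ^ 2 ≤ 1 := by nlinarith [sq_nonneg a]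
        have h4 := hpoly (b ^ 2) (sq_nonneg b) hb1
        have ha2 : a ^ 2 = 1 - b ^ 2 := by linarith
        calc (k * b) ^ 2 * a ^ 2 + (k * b) ^ 4
            = k ^ 2 * b ^ 2 * (1 - b ^ 2) + k ^ 4 * (b ^ 2) ^ 2 := by rw [ha2]; ring
          _ ≤ M ^ 2 := h4
      linarith
    calc Real.sqrt (‖innA2 A (Sop z) z‖ ^ 2 + normA2 A (Sop z) ^ 4)
        ≤ Real.sqrt (M ^ 2) := Real.sqrt_le_sqrt hE
      _ = M := Real.sqrt_sq hM
  have hpoly_triv : ∀ u : ℝ, 0 ≤ u → u ≤ 1 →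
      k ^ 2 * u * (1 - u) + k ^ 4 * u ^ 2 ≤ (Real.sqrt (k ^ 2 + k ^ 4)) ^ 2 := by
    intro u hu0 hu1
    have hkk : (0:ℝ) ≤ k ^ 2 + k ^ 4 := by positivity
    rw [Real.sq_sqrt hkk]
    have h1 : (0:ℝ) ≤ k ^ 2 * (1 - u * (1 - u)) :=
      mul_nonneg (sq_nonneg k) (by nlinarith [sq_nonneg (2 * u - 1)])
    have h2 : (0:ℝ) ≤ k ^ 4 * (1 - u ^ 2) :=
      mul_nonneg (pow_nonneg hk0 4) (by nlinarith)
    nlinarith [h1, h2]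
  have hbdd : BddAbove SD :=
    ⟨Real.sqrt (k ^ 2 + k ^ 4), fun r hr =>
      key_ub _ (Real.sqrt_nonneg _) hpoly_triv r hr⟩
  have hSD0 : (0 : ℝ) ∈ SD := by
    refine ⟨(x₀, 0), ?_, ?_⟩
    · rw [hn2]
      simp [← hn, hx₀]
    · rw [hval1, hval2]
      simp
  have hSDne : SD.Nonempty := ⟨0, hSD0⟩
  -- generic lower bound via witnesses
  have key_lb : ∀ a₀ b₀ : ℝ, 0 ≤ a₀ → 0 ≤ b₀ → a₀ ^ 2 + b₀ ^ 2 = 1 →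
      Real.sqrt (a₀ ^ 2 * b₀ ^ 2 * k ^ 2 + b₀ ^ 4 * k ^ 4) ≤ sSup SD := by
    intro a₀ b₀ ha hb hab
    set F : ℝ → ℝ := fun t => Real.sqrt (a₀ ^ 2 * b₀ ^ 2 * max t 0 ^ 2 + b₀ ^ 4 * max t 0 ^ 4)
      with hFdef
    have hmono : Monotone F := by
      intro u v huv
      have h1 : max u 0 ≤ max v 0 := max_le_max huv le_rfl
      have h2 : (0:ℝ) ≤ max u 0 := le_max_right _ _
      apply Real.sqrt_le_sqrt
      gcongr
    have hcont : ContinuousAt F (sSup T) := by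
      apply Continuous.continuousAt
      simp only [hFdef]
      fun_prop
    have himg : F '' T ⊆ SD := by
      rintro r ⟨t, ⟨x, hx, rfl⟩, rfl⟩
      have hxs : ‖s x‖ = 1 := by rw [← hn]; exact hx
      have ht0 : 0 ≤ normA A (X x) := Real.sqrt_nonneg _
      have htm : max (normA A (X x)) 0 = normA A (X x) := max_eq_left ht0
      by_cases ht : normA A (X x) = 0
      · refine ⟨(x, 0), ?_, ?_⟩
        · rw [hn2]
          simp [hxs, map_zero]
        · rw [hval1, hval2]
          simp only [hFdef, htm, ht]
          simp [map_zero]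
      · have htpos : 0 < normA A (X x) := lt_of_le_of_ne ht0 (Ne.symm ht)
        have hts : normA A (X x) = ‖s (X x)‖ := hn _
        set t : ℝ := normA A (X x) with htd
        have htne : t ≠ 0 := ht
        have e1 : ‖s (((a₀ / t : ℝ) : ℂ) • X x)‖ = a₀ := by
          rw [map_smul, norm_smul, Complex.norm_real, Real.norm_eq_abs,
            abs_of_nonneg (div_nonneg ha ht0), ← hts, div_mul_cancel₀ a₀ htne]
        have e2 : ‖s (((b₀ : ℝ) : ℂ) • x)‖ = b₀ := by
          rw [map_smul, norm_smul, Complex.norm_real, Real.norm_eq_abs,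
            abs_of_nonneg hb, hxs, mul_one]
        refine ⟨(((a₀ / t : ℝ) : ℂ) • X x, ((b₀ : ℝ) : ℂ) • x), ?_, ?_⟩
        · rw [hn2]
          dsimp only
          rw [e1, e2, hab, Real.sqrt_one]
        · rw [hval1, hval2]
          dsimp only
          have e3 : X (((b₀ : ℝ) : ℂ) • x) = ((b₀ : ℝ) : ℂ) • X x := map_smul X _ _
          have e4 : ‖s (X (((b₀ : ℝ) : ℂ) • x))‖ = b₀ * t := by
            rw [e3, map_smul, norm_smul, Complex.norm_real, Real.norm_eq_abs,
              abs_of_nonneg hb, ← hts]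
          have e5 : ‖
              (inner ℂ (s (X (((b₀ : ℝ) : ℂ) • x))) (s (((a₀ / t : ℝ) : ℂ) • X x)) : ℂ)‖
              = b₀ * (a₀ / t) * t ^ 2 := by
            rw [e3, map_smul, map_smul, inner_smul_left,
              inner_smul_right, inner_self_eq_norm_sq_to_K, ← hts]
            simp only [norm_mul, norm_pow, RCLike.norm_conj, Complex.norm_real,
              RCLike.norm_ofReal, Real.norm_eq_abs]
            rw [abs_of_nonneg hb, abs_of_nonneg (div_nonneg ha ht0), abs_of_nonneg ht0]
            ring
          rw [e4, e5]
          simp only [hFdef, htm]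
          congr 1
          field_simp
    have hmap : F (sSup T) = sSup (F '' T) :=
      hmono.map_csSup_of_continuousAt hcont hTne hTbdd
    have hle2 : sSup (F '' T) ≤ sSup SD := csSup_le_csSup hbdd (hTne.image F) himg
    have hFk : F k = Real.sqrt (a₀ ^ 2 * b₀ ^ 2 * k ^ 2 + b₀ ^ 4 * k ^ 4) := by
      simp only [hFdef, max_eq_left hk0]
    calc Real.sqrt (a₀ ^ 2 * b₀ ^ 2 * k ^ 2 + b₀ ^ 4 * k ^ 4) = F k := hFk.symm
      _ = F (sSup T) := by rw [hkT]
      _ = sSup (F '' T) := hmap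
      _ ≤ sSup SD := hle2
  -- the three cases
  refine ⟨?_, ?_, ?_⟩
  · intro hk
    rw [hdw]
    have hub : ∀ r ∈ SD, r ≤ 0 := by
      apply key_ub 0 le_rfl
      intro u hu0 hu1
      rw [hk]
      norm_num
    exact le_antisymm (csSup_le hSDne hub) (le_csSup hbdd hSD0)
  · intro hkpos hklt
    rw [hdw]
    have h2 : (1 / Real.sqrt 2 : ℝ) ^ 2 = 1 / 2 := by
      rw [div_pow, one_pow, Real.sq_sqrt (by norm_num : (0:ℝ) ≤ 2)]
    have hk2 : k ^ 2 < 1 / 2 := by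
      calc k ^ 2 < (1 / Real.sqrt 2) ^ 2 := by
            apply pow_lt_pow_left₀ hklt hk0
            norm_num
        _ = 1 / 2 := h2
    have hd0 : (0:ℝ) < 1 - k ^ 2 := by linarith
    have hne : (1 - k ^ 2 : ℝ) ≠ 0 := ne_of_gt hd0
    have hsd : Real.sqrt (1 - k ^ 2) ^ 2 = 1 - k ^ 2 := Real.sq_sqrt hd0.le
    have hsd0 : 0 < Real.sqrt (1 - k ^ 2) := Real.sqrt_pos.2 hd0
    have hM0 : 0 ≤ k / (2 * Real.sqrt (1 - k ^ 2)) := by positivity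
    have hM2 : (k / (2 * Real.sqrt (1 - k ^ 2))) ^ 2 = k ^ 2 / (4 * (1 - k ^ 2)) := by
      rw [div_pow, mul_pow, hsd]
      norm_num
    have hub : ∀ r ∈ SD, r ≤ k / (2 * Real.sqrt (1 - k ^ 2)) := by
      apply key_ub _ hM0
      intro v hv0 hv1
      rw [hM2, le_div_iff₀ (by linarith)]
      nlinarith [mul_nonneg (sq_nonneg k) (sq_nonneg (2 * (1 - k ^ 2) * v - 1))]
    have hu1 : 1 / (2 * (1 - k ^ 2)) ≤ 1 := by
      rw [div_le_one (by linarith)]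
      linarith
    have hu0 : (0:ℝ) ≤ 1 / (2 * (1 - k ^ 2)) := by positivity
    have ha2 : (Real.sqrt (1 - 1 / (2 * (1 - k ^ 2)))) ^ 2 = 1 - 1 / (2 * (1 - k ^ 2)) :=
      Real.sq_sqrt (by linarith)
    have hb2 : (Real.sqrt (1 / (2 * (1 - k ^ 2)))) ^ 2 = 1 / (2 * (1 - k ^ 2)) :=
      Real.sq_sqrt hu0
    have hlb := key_lb (Real.sqrt (1 - 1 / (2 * (1 - k ^ 2))))
      (Real.sqrt (1 / (2 * (1 - k ^ 2))))
      (Real.sqrt_nonneg _) (Real.sqrt_nonneg _) (by rw [ha2, hb2]; ring)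
    have hb4 : (Real.sqrt (1 / (2 * (1 - k ^ 2)))) ^ 4 = (1 / (2 * (1 - k ^ 2))) ^ 2 := by
      rw [show (4:ℕ) = 2 * 2 from rfl, pow_mul, hb2]
    have harg : (Real.sqrt (1 - 1 / (2 * (1 - k ^ 2)))) ^ 2
          * (Real.sqrt (1 / (2 * (1 - k ^ 2)))) ^ 2 * k ^ 2
        + (Real.sqrt (1 / (2 * (1 - k ^ 2)))) ^ 4 * k ^ 4 = k ^ 2 / (4 * (1 - k ^ 2)) := by
      rw [ha2, hb2, hb4]
      field_simp
      ring
    rw [harg, ← hM2, Real.sqrt_sq hM0] at hlb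
    exact le_antisymm (csSup_le hSDne hub) hlb
  · intro hkge
    rw [hdw]
    have hkpos : 0 < k := lt_of_lt_of_le (by positivity) hkge
    have hk2 : 1 / 2 ≤ k ^ 2 := by
      have h1 : (1 / Real.sqrt 2 : ℝ) ^ 2 ≤ k ^ 2 := by
        apply pow_le_pow_left₀ (by positivity) hkge
      rwa [div_pow, one_pow, Real.sq_sqrt (by norm_num : (0:ℝ) ≤ 2)] at h1
    have hub : ∀ r ∈ SD, r ≤ k ^ 2 := by
      apply key_ub _ (sq_nonneg k)
      intro v hv0 hv1
      have h1 : (0:ℝ) ≤ k ^ 2 * (1 - v) := mul_nonneg (sq_nonneg k) (by linarith)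
      have h2 : (1 / 2 : ℝ) * (1 + v) ≤ k ^ 2 * (1 + v) :=
        mul_le_mul_of_nonneg_right hk2 (by linarith)
      have h3 : (0:ℝ) ≤ k ^ 2 * (1 + v) - v := by linarith
      nlinarith [mul_nonneg h1 h3]
    have hlb := key_lb 0 1 le_rfl zero_le_one (by norm_num)
    have hkk : (0:ℝ) ^ 2 * 1 ^ 2 * k ^ 2 + 1 ^ 4 * k ^ 4 = (k ^ 2) ^ 2 := by ring
    rw [hkk, Real.sqrt_sq (sq_nonneg k)] at hlb
    exact le_antisymm (csSup_le hSDne hub) hlb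
end
end
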